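/- arXiv:2601.12048 — 3 statements merged into one kernel-verified Lean document; each statement's English description precedes it below -/
import Mathlib

section
/- For every integer n ≥ 0 and every integer r ≥ 2, F_r(n) = F_{r+1}(n); that is, the cardinality of the set of 3-colored partitions of n belonging to F_r is independent of r. -/
open PowerSeries Finset

/-- `l` is (the list of parts, in non-increasing order, of) an integer partition. -/
def IsPtn (l : List ℕ) : Prop := l.Pairwise (· ≥ ·) ∧ ∀ x ∈ l, 0 < x

/-- Gordon's difference condition: `λ_j − λ_{j+r−1} ≥ 2` whenever both parts exist. -/
def GordonCond (r : ℕ) (l : List ℕ) : Prop :=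
  ∀ j : ℕ, j + (r - 1) < l.length → l.getD (j + (r - 1)) 0 + 2 ≤ l.getD j 0

/-- membership in `B_{r,i}`: Gordon's difference condition and at most `i−1` parts equal to 1. -/
def MemB (r i : ℕ) (l : List ℕ) : Prop := IsPtn l ∧ GordonCond r l ∧ l.count 1 ≤ i - 1

/-- the smallest part of a partition (listed in non-increasing order). -/
def Kpart (l : List ℕ) : ℕ := l.getD (l.length - 1) 0

/-- the `k`-th smallest part of a partition (listed in non-increasing order). -/
def Ikpart (l : List ℕ) (k : ℕ) : ℕ := l.getD (l.length - k) 0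

namespace CY

/-- getD is antitone on a sorted (≥) list. -/
lemma getD_anti {l : List ℕ} (hs : l.Pairwise (· ≥ ·)) {i j : ℕ} (hij : i ≤ j)
    (hj : j < l.length) : l.getD j 0 ≤ l.getD i 0 := by
  rcases eq_or_lt_of_le hij with rfl | hlt
  · rfl
  · rw [List.getD_eq_getElem l 0 hj, List.getD_eq_getElem l 0 (lt_trans hlt hj)]
    exact (List.pairwise_iff_getElem.1 hs) i j _ _ hlt

lemma getD_pos {l : List ℕ} (hl : IsPtn l) {i : ℕ} (hi : i < l.length) :
    1 ≤ l.getD i 0 := by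
  rw [List.getD_eq_getElem l 0 hi]
  exact hl.2 _ (List.getElem_mem hi)

lemma Kpart_le_getD {l : List ℕ} (hs : l.Pairwise (· ≥ ·)) {i : ℕ} (hi : i < l.length) :
    Kpart l ≤ l.getD i 0 := by
  unfold Kpart
  exact getD_anti hs (Nat.le_sub_one_of_lt hi) (by omega)

lemma Kpart_le_mem {l : List ℕ} (hs : l.Pairwise (· ≥ ·)) {x : ℕ} (hx : x ∈ l) :
    Kpart l ≤ x := by
  obtain ⟨i, hi, rfl⟩ := List.getElem_of_mem hx
  have := Kpart_le_getD hs hi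
  rwa [List.getD_eq_getElem l 0 hi] at this

lemma Kpart_pos {l : List ℕ} (hl : IsPtn l) (hne : l ≠ []) : 1 ≤ Kpart l :=
  getD_pos hl (show l.length - 1 < l.length by
    have := List.length_pos_iff.2 hne; omega)

end CY

namespace CY2
open CY

lemma cge_split (l : List ℕ) (v : ℕ) :
    l.countP (fun x => v ≤ x) = l.countP (fun x => v + 1 ≤ x) + l.count v := by
  induction l with
  | nil => simp
  | cons a t ih =>
    simp only [List.countP_cons, List.count_cons, ih, decide_eq_true_eq, beq_iff_eq]
    split_ifs <;> omega

lemma countP_or_le (l : List ℕ) (a b : ℕ) :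
    l.countP (fun x => x = a ∨ x = b) ≤ l.count a + l.count b := by
  induction l with
  | nil => simp
  | cons c t ih =>
    simp only [List.countP_cons, List.count_cons, decide_eq_true_eq, beq_iff_eq]
    split_ifs <;> omega

/-- if `j < #{x ∈ l | v ≤ x}` then `v ≤ l[j]`. -/
lemma getD_ge_of_lt_cge {l : List ℕ} (hs : l.Pairwise (· ≥ ·)) {v j : ℕ}
    (hj : j < l.countP (fun x => v ≤ x)) : v ≤ l.getD j 0 := by
  have hjl : j < l.length := lt_of_lt_of_le hj (List.countP_le_length)
  by_contra hlt
  push_neg at hlt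
  have hdecomp : l.countP (fun x => v ≤ x) =
      (l.take j).countP (fun x => v ≤ x) + (l.drop j).countP (fun x => v ≤ x) := by
    rw [← List.countP_append, List.take_append_drop]
  have h1 : (l.take j).countP (fun x => v ≤ x) ≤ j := by
    calc (l.take j).countP (fun x => v ≤ x) ≤ (l.take j).length :=
          List.countP_le_length
    _ ≤ j := by simp
  have h2 : (l.drop j).countP (fun x => v ≤ x) = 0 := by
    rw [List.countP_eq_zero]
    intro x hx
    obtain ⟨i, hi, rfl⟩ := List.getElem_of_mem hx
    have hji : j + i < l.length := by
      have := hi; simp only [List.length_drop] at this; omega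
    have hle : l.getD (j+i) 0 ≤ l.getD j 0 := getD_anti hs (Nat.le_add_right j i) hji
    rw [List.getD_eq_getElem l 0 hji, List.getD_eq_getElem l 0 hjl] at hle
    rw [List.getD_eq_getElem l 0 hjl] at hlt
    rw [List.getElem_drop]
    simp only [decide_eq_true_eq]
    omega
  omega

lemma lt_cge_of_getD {l : List ℕ} (hs : l.Pairwise (· ≥ ·)) {v j : ℕ}
    (hj : j < l.length) (hv : v ≤ l.getD j 0) : j < l.countP (fun x => v ≤ x) := by
  have hlen : (l.take (j+1)).length = j + 1 := by
    simp only [List.length_take]; omega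
  have hall : ∀ x ∈ l.take (j+1), (fun x => decide (v ≤ x)) x = true := by
    intro x hx
    obtain ⟨i, hi, rfl⟩ := List.getElem_of_mem hx
    rw [hlen] at hi
    have hli : i < l.length := by omega
    have hle : l.getD j 0 ≤ l.getD i 0 := getD_anti hs (show i ≤ j by omega) hj
    rw [List.getD_eq_getElem l 0 hli, List.getD_eq_getElem l 0 hj] at *
    rw [List.getElem_take]
    simp only [decide_eq_true_eq]
    omega
  have h1 : (l.take (j+1)).countP (fun x => v ≤ x) = j + 1 := by
    rw [List.countP_eq_length.2 hall, hlen]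
  have h2 := List.Sublist.countP_le (p := fun x => decide (v ≤ x)) (List.take_sublist (j+1) l)
  omega

lemma gordon_to_wnd {l : List ℕ} {R : ℕ} (hl : IsPtn l) (hG : GordonCond R l)
    (hR : 1 ≤ R) {v : ℕ} (hv : 1 ≤ v) : l.count v + l.count (v+1) ≤ R - 1 := by
  by_contra hbig
  push_neg at hbig
  have hsplit1 := cge_split l v
  have hsplit2 := cge_split l (v+1)
  set c2 := l.countP (fun x => v + 1 + 1 ≤ x) with hc2
  have hlen : l.countP (fun x => v ≤ x) ≤ l.length := List.countP_le_length
  have hj' : c2 + (R - 1) < l.countP (fun x => v ≤ x) := by omega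
  have hjlen : c2 + (R - 1) < l.length := by omega
  have hup : v ≤ l.getD (c2 + (R-1)) 0 := getD_ge_of_lt_cge hl.1 hj'
  have hdown : l.getD c2 0 < v + 2 := by
    by_contra hge
    push_neg at hge
    have hge' : v + 1 + 1 ≤ l.getD c2 0 := by omega
    have := lt_cge_of_getD hl.1 (show c2 < l.length by omega) hge'
    omega
  have := hG c2 hjlen
  omega

lemma wnd_to_gordon {l : List ℕ} {R : ℕ} (hl : IsPtn l) (hR : 1 ≤ R)
    (h : ∀ v, 1 ≤ v → l.count v + l.count (v+1) ≤ R - 1) : GordonCond R l := by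
  intro j hj
  set a := l.getD (j + (R-1)) 0 with ha
  set b := l.getD j 0 with hb
  have ha1 : 1 ≤ a := getD_pos hl hj
  have hba : a ≤ b := getD_anti hl.1 (Nat.le_add_right j (R-1)) hj
  by_contra hcon
  push_neg at hcon
  set s := (l.drop j).take R with hs
  have hlens : s.length = R := by
    simp only [hs, List.length_take, List.length_drop]
    omega
  have hall : ∀ x ∈ s, x = a ∨ x = a + 1 := by
    intro x hx
    obtain ⟨i, hi, rfl⟩ := List.getElem_of_mem hx
    rw [hlens] at hi
    have hji : j + i < l.length := by omega
    have h1 : s[i]'(by rw [hlens]; exact hi) = l[j + i]'hji := by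
      simp only [hs, List.getElem_take, List.getElem_drop]
    have hlow := getD_anti hl.1 (show j + i ≤ j + (R-1) by omega) hj
    have hhigh := getD_anti hl.1 (Nat.le_add_right j i) hji
    rw [List.getD_eq_getElem l 0 hji] at hlow hhigh
    rw [← ha] at hlow
    rw [← hb] at hhigh
    rw [h1]
    omega
  have hcount : s.countP (fun x => x = a ∨ x = a + 1) = R := by
    rw [List.countP_eq_length.2 (by intro x hx; simpa using hall x hx), hlens]
  have hle := countP_or_le s a (a+1)
  have hsub : s.Sublist l := (List.take_sublist _ _).trans (List.drop_sublist _ _)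
  have hca := hsub.count_le a
  have hcb := hsub.count_le (a+1)
  have := h a ha1
  omega

end CY2

namespace CY3
open CY CY2

abbrev St := List ℕ × List ℕ × List ℕ

def Vg (l : List ℕ) : ℕ := l.length - l.count 1

def ClassC (s : St) : Prop := s.1 ≠ [] ∧ Kpart s.1 ≤ s.2.1.length

def mOf (s : St) : ℕ := Kpart s.1 + Ikpart s.2.1 (Kpart s.1)

def Cond (R : ℕ) (s : St) : Prop := ClassC s ∧ mOf s ≤ R + Vg s.2.2

def gUp (m : ℕ) (g : List ℕ) : List ℕ := g.map (·+1) ++ List.replicate (m - g.length) 1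

def gDown (g : List ℕ) : List ℕ := (g.filter (fun x => x ≠ 1)).map (·-1)

/- ---------- counting lemmas for green moves ---------- -/

lemma count_map_add_one (l : List ℕ) (v : ℕ) : (l.map (·+1)).count (v+1) = l.count v := by
  induction l with
  | nil => simp
  | cons a t ih =>
    simp only [List.map_cons, List.count_cons, ih, beq_iff_eq]
    split_ifs <;> omega

lemma count_one_map_add_one {l : List ℕ} (hl : ∀ x ∈ l, 0 < x) :
    (l.map (·+1)).count 1 = 0 := by
  have := count_map_add_one l 0
  rw [this, List.count_eq_zero]
  intro h
  exact absurd (hl 0 h) (by omega)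

lemma count_map_pred (l : List ℕ) {v : ℕ} (hv : 1 ≤ v) :
    (l.map (·-1)).count v = l.count (v+1) := by
  induction l with
  | nil => simp
  | cons a t ih =>
    simp only [List.map_cons, List.count_cons, ih, beq_iff_eq]
    split_ifs <;> omega

lemma count_filter_ne_one (l : List ℕ) {v : ℕ} (hv : v ≠ 1) :
    (l.filter (fun x => x ≠ 1)).count v = l.count v :=
  List.count_filter (by simp [hv])

lemma length_filter_ne_one (l : List ℕ) :
    (l.filter (fun x => x ≠ 1)).length + l.count 1 = l.length := by
  induction l with
  | nil => simp
  | cons a t ih =>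
    simp only [ne_eq, decide_not] at ih ⊢
    by_cases h : a = 1
    · subst h; simp; omega
    · simp [h, List.count_cons]; omega

lemma sum_filter_ne_one (l : List ℕ) :
    (l.filter (fun x => x ≠ 1)).sum + l.count 1 = l.sum := by
  induction l with
  | nil => simp
  | cons a t ih =>
    simp only [ne_eq, decide_not] at ih ⊢
    by_cases h : a = 1
    · subst h; simp; omega
    · simp [h, List.count_cons]; omega

lemma sum_map_add_one (l : List ℕ) : (l.map (·+1)).sum = l.sum + l.length := by
  induction l with
  | nil => simp
  | cons a t ih => simp [ih]; omega

lemma sum_map_pred (l : List ℕ) (hl : ∀ x ∈ l, 0 < x) :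
    (l.map (·-1)).sum + l.length = l.sum := by
  induction l with
  | nil => simp
  | cons a t ih =>
    have ha := hl a (by simp)
    have : (t.map (·-1)).sum + t.length = t.sum := ih (fun x hx => hl x (by simp [hx]))
    simp only [List.map_cons, List.sum_cons, List.length_cons]
    omega

lemma ptn_decomp {l : List ℕ} (hl : IsPtn l) :
    l.filter (fun x => x ≠ 1) ++ List.replicate (l.count 1) 1 = l := by
  induction l with
  | nil => simp
  | cons a t ih =>
    have hl' := hl.1
    rw [List.pairwise_cons] at hl'
    by_cases h : a = 1
    · subst h
      have hall : ∀ b ∈ (1 :: t : List ℕ), b = 1 := by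
        intro b hb
        rcases List.mem_cons.1 hb with rfl | hb'
        · rfl
        · have h1 := hl'.1 b hb'
          have h2 := hl.2 b (by simp [hb'])
          omega
      have hrep : (1 :: t : List ℕ) = List.replicate ((1 :: t : List ℕ).count 1) 1 :=
        List.eq_replicate_iff.2 ⟨(List.count_eq_length.2 (by
          intro b hb; simp [hall b hb])).symm, hall⟩
      have hfil : (1 :: t : List ℕ).filter (fun x => x ≠ 1) = [] := by
        rw [List.filter_eq_nil_iff]
        intro x hx
        simp [hall x hx]
      rw [hfil, List.nil_append]
      exact hrep.symm
    · have ht : IsPtn t := ⟨hl'.2, fun x hx => hl.2 x (by simp [hx])⟩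
      have hfc : (a :: t).filter (fun x => x ≠ 1) = a :: t.filter (fun x => x ≠ 1) := by
        simp [List.filter_cons, h]
      have hcc : (a :: t).count 1 = t.count 1 := by
        simp [List.count_cons, h]
      rw [hfc, hcc, List.cons_append, ih ht]

/- ---------- length/sum/count of gUp, gDown ---------- -/

lemma gUp_length {m : ℕ} {g : List ℕ} (h : g.length ≤ m) : (gUp m g).length = m := by
  simp [gUp]; omega

lemma gUp_sum {m : ℕ} {g : List ℕ} (h : g.length ≤ m) : (gUp m g).sum = g.sum + m := by
  simp [gUp, sum_map_add_one, List.sum_replicate, smul_eq_mul]; omega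

lemma gUp_count_one {m : ℕ} {g : List ℕ} (hg : ∀ x ∈ g, 0 < x) :
    (gUp m g).count 1 = m - g.length := by
  simp [gUp, List.count_append, count_one_map_add_one hg, List.count_replicate]

lemma gUp_count_succ (m : ℕ) (g : List ℕ) {v : ℕ} (hv : 1 ≤ v) :
    (gUp m g).count (v+1) = g.count v := by
  have : ((1:ℕ) == v + 1) = false := by simp; omega
  simp [gUp, List.count_append, count_map_add_one, List.count_replicate, this]

lemma gUp_isPtn {g : List ℕ} (hg : IsPtn g) (m : ℕ) : IsPtn (gUp m g) := by
  constructor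
  · rw [gUp, List.pairwise_append]
    refine ⟨?_, ?_, ?_⟩
    · rw [List.pairwise_map]
      exact hg.1.imp (fun h => by omega) |>.imp (fun {a b} h => h)
    · rw [List.pairwise_replicate]; right; omega
    · intro a ha b hb
      rw [List.eq_of_mem_replicate hb]
      obtain ⟨x, _, rfl⟩ := List.mem_map.1 ha
      omega
  · intro x hx
    rcases List.mem_append.1 hx with h | h
    · obtain ⟨y, _, rfl⟩ := List.mem_map.1 h; omega
    · rw [List.eq_of_mem_replicate h]; omega

lemma gDown_isPtn {g : List ℕ} (hg : IsPtn g) : IsPtn (gDown g) := by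
  constructor
  · rw [gDown, List.pairwise_map]
    have hs : (g.filter (fun x => x ≠ 1)).Pairwise (· ≥ ·) :=
      hg.1.sublist List.filter_sublist
    exact hs.imp (fun h => by omega)
  · intro x hx
    obtain ⟨y, hy, rfl⟩ := List.mem_map.1 hx
    have h1 := hg.2 y (List.mem_of_mem_filter hy)
    have h2 := List.of_mem_filter hy
    simp only [ne_eq, decide_not, Bool.not_eq_true', decide_eq_false_iff_not] at h2
    omega

lemma gDown_length {g : List ℕ} : (gDown g).length = g.length - g.count 1 := by
  have := length_filter_ne_one g
  simp only [gDown, List.length_map]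
  omega

lemma gDown_sum {g : List ℕ} (hg : IsPtn g) : (gDown g).sum + g.length = g.sum := by
  have h1 := sum_filter_ne_one g
  have h2 := sum_map_pred (g.filter (fun x => x ≠ 1)) (fun x hx => hg.2 x (List.mem_of_mem_filter hx))
  have h3 := length_filter_ne_one g
  simp only [gDown]
  omega

lemma gDown_count {g : List ℕ} {v : ℕ} (hv : 1 ≤ v) :
    (gDown g).count v = g.count (v+1) := by
  rw [gDown, count_map_pred _ hv, count_filter_ne_one _ (by omega)]

lemma gDown_gUp {g : List ℕ} (hg : IsPtn g) (m : ℕ) : gDown (gUp m g) = g := by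
  have h1 : (gUp m g).filter (fun x => x ≠ 1) = g.map (·+1) := by
    rw [gUp, List.filter_append]
    have e1 : (g.map (·+1)).filter (fun x => x ≠ 1) = g.map (·+1) := by
      rw [List.filter_eq_self]
      intro a ha
      obtain ⟨y, hy, rfl⟩ := List.mem_map.1 ha
      have := hg.2 y hy
      simp; omega
    have e2 : (List.replicate (m - g.length) (1:ℕ)).filter (fun x => x ≠ 1) = [] := by
      rw [List.filter_eq_nil_iff]
      intro a ha
      rw [List.eq_of_mem_replicate ha]
      simp
    rw [e1, e2, List.append_nil]
  rw [gDown, h1, List.map_map]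
  have : ∀ a ∈ g, ((fun x => x - 1) ∘ (fun x => x + 1)) a = id a := by
    intro a _; simp
  rw [List.map_congr_left this, List.map_id]

lemma gUp_gDown {g : List ℕ} (hg : IsPtn g) : gUp g.length (gDown g) = g := by
  have h1 : (gDown g).map (·+1) = g.filter (fun x => x ≠ 1) := by
    rw [gDown, List.map_map]
    have : ∀ a ∈ g.filter (fun x => x ≠ 1), ((fun x => x + 1) ∘ (fun x => x - 1)) a = id a := by
      intro a ha
      have := hg.2 a (List.mem_of_mem_filter ha)
      simp; omega
    rw [List.map_congr_left this, List.map_id]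
  rw [gUp, h1, gDown_length]
  have h2 : g.length - (g.length - g.count 1) = g.count 1 := by
    have : g.count 1 ≤ g.length := List.count_le_length
    omega
  rw [h2, ptn_decomp hg]

end CY3

namespace CY4
open CY CY2 CY3

/- ---------- Kpart / Ikpart basics ---------- -/

lemma Kpart_append_singleton (l : List ℕ) (a : ℕ) : Kpart (l ++ [a]) = a := by
  unfold Kpart
  have h : (l ++ [a]).length - 1 = l.length := by simp
  rw [h, List.getD_eq_getElem _ 0 (by simp), List.getElem_append_right (by simp)]
  simp

lemma Kpart_eq_getLast (l : List ℕ) (h : l ≠ []) : Kpart l = l.getLast h := by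
  rw [List.getLast_eq_getElem, Kpart,
    List.getD_eq_getElem _ 0 (by have := List.length_pos_iff.2 h; omega)]

lemma sum_dropLast (l : List ℕ) (h : l ≠ []) : l.dropLast.sum + Kpart l = l.sum := by
  conv_rhs => rw [← List.dropLast_append_getLast h]
  rw [List.sum_append, Kpart_eq_getLast l h]
  simp

lemma Kpart_dropLast_ge {l : List ℕ} (hs : l.Pairwise (· ≥ ·)) (h : l.dropLast ≠ []) :
    Kpart l ≤ Kpart l.dropLast := by
  have hlen : l.dropLast.length = l.length - 1 := List.length_dropLast
  have hlp2 : 1 ≤ l.dropLast.length := List.length_pos_iff.2 h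
  unfold Kpart
  rw [List.getD_eq_getElem l.dropLast 0 (by omega),
    List.getD_eq_getElem l 0 (by omega), List.getElem_dropLast]
  exact (List.pairwise_iff_getElem.1 hs) _ _ (by omega) (by omega) (by omega)

lemma Ikpart_zero (l : List ℕ) : Ikpart l 0 = 0 := by
  unfold Ikpart
  rw [Nat.sub_zero, List.getD_eq_default _ _ (le_refl _)]

lemma Ikpart_mono {l : List ℕ} (hs : l.Pairwise (· ≥ ·)) {a b : ℕ} (hab : a ≤ b)
    (hb : b ≤ l.length) : Ikpart l a ≤ Ikpart l b := by
  rcases Nat.eq_zero_or_pos a with rfl | ha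
  · rw [Ikpart_zero]; omega
  rcases Nat.eq_zero_or_pos l.length with hl0 | hl1
  · unfold Ikpart; rw [hl0]; simp
  unfold Ikpart
  exact getD_anti hs (by omega) (by omega)

lemma Ikpart_pos {l : List ℕ} (hl : IsPtn l) {k : ℕ} (hk : 1 ≤ k) (hkl : k ≤ l.length) :
    1 ≤ Ikpart l k :=
  getD_pos hl (by omega)

/- ---------- erase/insert of red parts ---------- -/

/-- remove the `k`-th smallest part (list position `length - k`). -/
def rdE (k : ℕ) (rd : List ℕ) : List ℕ :=
  rd.take (rd.length - k) ++ rd.drop (rd.length - k + 1)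

/-- insert `i` as the `k`-th smallest part (list position `length + 1 - k`). -/
def rdI (k i : ℕ) (rd : List ℕ) : List ℕ :=
  rd.take (rd.length + 1 - k) ++ i :: rd.drop (rd.length + 1 - k)

lemma rdE_length {k : ℕ} {rd : List ℕ} (h1 : 1 ≤ k) (h2 : k ≤ rd.length) :
    (rdE k rd).length = rd.length - 1 := by
  simp [rdE]; omega

lemma rdI_length (k i : ℕ) (rd : List ℕ) : (rdI k i rd).length = rd.length + 1 := by
  simp [rdI]; omega

lemma rdE_sum {k : ℕ} {rd : List ℕ} (h1 : 1 ≤ k) (h2 : k ≤ rd.length) :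
    (rdE k rd).sum + Ikpart rd k = rd.sum := by
  have hplt : rd.length - k < rd.length := by omega
  have hd : rd.drop (rd.length - k) = rd[rd.length - k] :: rd.drop (rd.length - k + 1) :=
    (List.getElem_cons_drop hplt).symm
  have hIk : Ikpart rd k = rd[rd.length - k] := List.getD_eq_getElem rd 0 hplt
  conv_rhs => rw [← List.take_append_drop (rd.length - k) rd]
  rw [rdE, hd, hIk, List.sum_append, List.sum_append, List.sum_cons]
  omega

lemma rdI_sum (k i : ℕ) (rd : List ℕ) : (rdI k i rd).sum = rd.sum + i := by
  rw [rdI]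
  conv_rhs => rw [← List.take_append_drop (rd.length + 1 - k) rd]
  rw [List.sum_append, List.sum_append, List.sum_cons]
  omega

lemma rdE_sublist (k : ℕ) (rd : List ℕ) : (rdE k rd).Sublist rd := by
  rcases Nat.lt_or_ge (rd.length - k) rd.length with hp | hp
  · have hd : rd.drop (rd.length - k) = rd[rd.length - k] :: rd.drop (rd.length - k + 1) :=
      (List.getElem_cons_drop hp).symm
    have h2 : (rdE k rd).Sublist (rd.take (rd.length - k) ++ rd.drop (rd.length - k)) := by
      rw [hd]
      exact (List.sublist_cons_self _ _).append_left _
    simpa [List.take_append_drop] using h2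
  · have : rd.drop (rd.length - k + 1) = [] := List.drop_eq_nil_of_le (by omega)
    rw [rdE, this, List.append_nil]
    exact List.take_sublist _ _

lemma rdE_sorted {k : ℕ} {rd : List ℕ} (hs : rd.Pairwise (· ≥ ·)) :
    (rdE k rd).Pairwise (· ≥ ·) := hs.sublist (rdE_sublist k rd)

/-- value of `Ikpart` after erasing: positions below the removed one are unchanged. -/
lemma rdE_Ikpart_lt {k j : ℕ} {rd : List ℕ} (h1 : 1 ≤ k) (h2 : k ≤ rd.length)
    (hj1 : 1 ≤ j) (hj2 : j ≤ k - 1) :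
    Ikpart (rdE k rd) j = Ikpart rd j := by
  have hL := rdE_length h1 h2
  unfold Ikpart
  rw [hL]
  rw [List.getD_eq_getElem _ 0 (by omega), List.getD_eq_getElem _ 0 (by omega)]
  simp only [rdE]
  rw [List.getElem_append_right (by simp [List.length_take]; omega)]
  rw [List.getElem_drop]
  congr 1
  simp only [List.length_take]
  omega

/-- value of `Ikpart` after erasing: positions at/above the removed one shift by one. -/
lemma rdE_Ikpart_ge {k j : ℕ} {rd : List ℕ} (h1 : 1 ≤ k) (h2 : k ≤ rd.length)
    (hj1 : k ≤ j) (hj2 : j ≤ rd.length - 1) :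
    Ikpart (rdE k rd) j = Ikpart rd (j+1) := by
  have hL := rdE_length h1 h2
  unfold Ikpart
  rw [hL]
  rw [List.getD_eq_getElem _ 0 (by omega), List.getD_eq_getElem _ 0 (by omega)]
  simp only [rdE]
  rw [List.getElem_append_left (by simp [List.length_take]; omega), List.getElem_take]
  congr 1
  omega

lemma rdI_Ikpart_self {k : ℕ} (i : ℕ) {rd : List ℕ} (h1 : 1 ≤ k) (h2 : k ≤ rd.length + 1) :
    Ikpart (rdI k i rd) k = i := by
  have hp : (rd.take (rd.length + 1 - k)).length = rd.length + 1 - k := by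
    simp only [List.length_take]; omega
  unfold Ikpart
  rw [rdI_length, rdI, List.getD_append_right _ _ _ _ (le_of_eq hp), hp, Nat.sub_self]
  simp

lemma rdE_rdI {k i : ℕ} {rd : List ℕ} (h1 : 1 ≤ k) (h2 : k ≤ rd.length + 1) :
    rdE k (rdI k i rd) = rd := by
  have hL := rdI_length k i rd
  have hple : rd.length + 1 - k ≤ rd.length := by omega
  rw [rdE, hL]
  have e1 : rd.length + 1 - k = rd.length + 1 - k := rfl
  have htake : (rdI k i rd).take (rd.length + 1 - k) = rd.take (rd.length + 1 - k) := by
    rw [rdI]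
    rw [List.take_append_of_le_length (by simp [List.length_take]; omega)]
    rw [List.take_take]
    congr 1
    omega
  have hdrop : (rdI k i rd).drop (rd.length + 1 - k + 1) = rd.drop (rd.length + 1 - k) := by
    rw [rdI]
    have h5 : rd.take (rd.length + 1 - k) ++ i :: rd.drop (rd.length + 1 - k)
        = (rd.take (rd.length + 1 - k) ++ [i]) ++ rd.drop (rd.length + 1 - k) := by simp
    rw [h5, List.drop_left' (by simp [List.length_take]; omega)]
  rw [htake, hdrop, List.take_append_drop]

lemma rdI_rdE {k : ℕ} {rd : List ℕ} (h1 : 1 ≤ k) (h2 : k ≤ rd.length) :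
    rdI k (Ikpart rd k) (rdE k rd) = rd := by
  have hL := rdE_length h1 h2
  have hplt : rd.length - k < rd.length := by omega
  rw [rdI, hL]
  have e1 : rd.length - 1 + 1 - k = rd.length - k := by omega
  rw [e1]
  have htake : (rdE k rd).take (rd.length - k) = rd.take (rd.length - k) := by
    rw [rdE, List.take_append_of_le_length (by simp only [List.length_take]; omega),
      List.take_take]
    congr 1
    omega
  have hdrop : (rdE k rd).drop (rd.length - k) = rd.drop (rd.length - k + 1) := by
    rw [rdE, List.drop_left' (by simp only [List.length_take]; omega)]
  rw [htake, hdrop]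
  have hIk : Ikpart rd k = rd[rd.length - k] := List.getD_eq_getElem rd 0 hplt
  rw [hIk, List.getElem_cons_drop, List.take_append_drop]

lemma rdI_sorted {k i : ℕ} {rd : List ℕ} (hs : rd.Pairwise (· ≥ ·)) (h1 : 1 ≤ k)
    (h2 : k ≤ rd.length + 1)
    (hup : k ≤ rd.length → i ≤ Ikpart rd k)
    (hdn : 2 ≤ k → Ikpart rd (k-1) ≤ i) :
    (rdI k i rd).Pairwise (· ≥ ·) := by
  have hple : rd.length + 1 - k ≤ rd.length := by omega
  have hdlen : (rd.drop (rd.length + 1 - k)).length = rd.length - (rd.length + 1 - k) := by simp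
  rw [rdI, List.pairwise_append]
  refine ⟨hs.sublist (List.take_sublist _ _), ?_, ?_⟩
  · rw [List.pairwise_cons]
    refine ⟨?_, hs.sublist (List.drop_sublist _ _)⟩
    intro b hb
    obtain ⟨t, ht, rfl⟩ := List.getElem_of_mem hb
    have hplt : rd.length + 1 - k < rd.length := by rw [hdlen] at ht; omega
    have hk2 : 2 ≤ k := by omega
    have hIk : Ikpart rd (k-1) = rd[rd.length + 1 - k] := by
      unfold Ikpart
      rw [List.getD_eq_getElem rd 0 (show rd.length - (k-1) < rd.length by omega)]
      congr 1
      omega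
    rw [hdlen] at ht
    have hle : rd[rd.length + 1 - k + t]'(by omega)
        ≤ rd[rd.length + 1 - k]'hplt := by
      rcases Nat.eq_zero_or_pos t with rfl | htpos
      · simp
      · have h9 := (List.pairwise_iff_getElem.1 hs) (rd.length + 1 - k)
          (rd.length + 1 - k + t) hplt (by omega) (by omega)
        exact h9
    have := hdn hk2
    rw [List.getElem_drop]
    show rd[rd.length + 1 - k + t]'(by omega) ≤ i
    omega
  · intro a ha b hb
    obtain ⟨u, hu, rfl⟩ := List.getElem_of_mem ha
    have hulen : u < rd.length + 1 - k := by
      have := hu; simp only [List.length_take] at this; omega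
    have hu' : u < rd.length := by omega
    have hgu : (rd.take (rd.length + 1 - k))[u]'hu = rd[u]'hu' := List.getElem_take
    have hk1 : k ≤ rd.length := by omega
    have hIk : Ikpart rd k = rd[rd.length - k]'(by omega) := by
      unfold Ikpart
      rw [List.getD_eq_getElem rd 0 (by omega)]
    have hau : rd[u]'hu' ≥ rd[rd.length - k]'(by omega) := by
      rcases Nat.lt_or_ge u (rd.length - k) with h | h
      · have h9 := (List.pairwise_iff_getElem.1 hs) u (rd.length - k) hu' (by omega) (by omega)
        exact h9
      · have : u = rd.length - k := by omega
        subst this; rfl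
    have hui : rd[u]'hu' ≥ i := by
      have := hup hk1
      omega
    rcases List.mem_cons.1 hb with rfl | hb'
    · rw [hgu]; exact hui
    · obtain ⟨t, ht, rfl⟩ := List.getElem_of_mem hb'
      rw [hdlen] at ht
      rw [hgu, List.getElem_drop]
      have h9 := (List.pairwise_iff_getElem.1 hs) u (rd.length + 1 - k + t) hu'
        (by omega) (by omega)
      exact h9

end CY4

namespace CY5
open CY CY2 CY3 CY4

def stripS : St → St
  | (b, rd, g) => (b.dropLast, rdE (Kpart b) rd, gUp (Kpart b + Ikpart rd (Kpart b)) g)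

def kSel (rd : List ℕ) (m : ℕ) : ℕ :=
  Nat.findGreatest (fun k => k + Ikpart rd (k-1) ≤ m) (rd.length + 1)

def peelS : St → St
  | (b, rd, g) =>
    (b ++ [kSel rd g.length],
     rdI (kSel rd g.length) (g.length - kSel rd g.length) rd, gDown g)

lemma counts_disjoint_le_length (l : List ℕ) {a b : ℕ} (hab : a ≠ b) :
    l.count a + l.count b ≤ l.length := by
  induction l with
  | nil => simp
  | cons c t ih =>
    simp only [List.count_cons, List.length_cons, beq_iff_eq]
    split_ifs with h1 h2 h2
    · omega
    · omega
    · omega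
    · omega

lemma notB_exists_window {R : ℕ} {g : List ℕ} (hg : IsPtn g) (hR : 1 ≤ R)
    (hNB : ¬ MemB R R g) : ∃ u, 1 ≤ u ∧ R ≤ g.count u + g.count (u+1) := by
  by_contra hnone
  push_neg at hnone
  apply hNB
  refine ⟨hg, wnd_to_gordon hg hR (fun v hv => by have := hnone v hv; omega), ?_⟩
  have h1 := hnone 1 (le_refl 1)
  omega

/-- all the invariants preserved along both loops (for r = R in `F_R → F_{R+1}`). -/
structure Inv (R : ℕ) (s : St) : Prop where
  hb : IsPtn s.1
  hr : IsPtn s.2.1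
  hg : IsPtn s.2.2
  hw : ∀ v, 1 ≤ v → s.2.2.count v + s.2.2.count (v+1) ≤ R
  hlm : ClassC s → s.2.2.length ≤ mOf s
  hBm : MemB R R s.2.2 → ClassC s → R + Vg s.2.2 ≤ mOf s

def total (s : St) : ℕ := s.1.sum + s.2.1.sum + s.2.2.sum

section Strip

variable {R : ℕ} {s : St} (hI : Inv R s) (hC : Cond R s) (hR : 2 ≤ R)

lemma classC_facts {R : ℕ} {b rd g : List ℕ} (hI : Inv R (b, rd, g))
    (hCl : ClassC (b, rd, g)) :
    1 ≤ Kpart b ∧ Kpart b ≤ rd.length ∧ 1 ≤ Ikpart rd (Kpart b) ∧ rd ≠ [] := by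
  obtain ⟨hb, hk⟩ := hCl
  have hk' : Kpart b ≤ rd.length := hk
  have h1 : 1 ≤ Kpart b := Kpart_pos hI.hb hb
  have h3 : 1 ≤ Ikpart rd (Kpart b) := Ikpart_pos hI.hr h1 hk'
  refine ⟨h1, hk', h3, ?_⟩
  intro h
  rw [h] at hk'
  simp at hk'
  omega

lemma stripS_comp {b rd g : List ℕ} :
    stripS (b, rd, g) = (b.dropLast, rdE (Kpart b) rd,
      gUp (Kpart b + Ikpart rd (Kpart b)) g) := rfl

lemma mOf_comp {b rd g : List ℕ} : mOf (b, rd, g) = Kpart b + Ikpart rd (Kpart b) := rfl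

/-- `m` does not decrease along strips. -/
lemma strip_m_le (hI : Inv R s) (hCl : ClassC s) (hCl' : ClassC (stripS s)) :
    mOf s ≤ mOf (stripS s) := by
  obtain ⟨b, rd, g⟩ := s
  have hbP : IsPtn b := hI.hb
  have hrP : IsPtn rd := hI.hr
  have hgP : IsPtn g := hI.hg
  obtain ⟨h1, hk, h3, -⟩ := classC_facts hI hCl
  have hb' : b.dropLast ≠ [] := hCl'.1
  have hk'0 : Kpart b.dropLast ≤ (rdE (Kpart b) rd).length := hCl'.2
  have hLE : (rdE (Kpart b) rd).length = rd.length - 1 := rdE_length h1 hk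
  rw [hLE] at hk'0
  have hkk : Kpart b ≤ Kpart b.dropLast := Kpart_dropLast_ge hbP.1 hb'
  have hIk : Ikpart (rdE (Kpart b) rd) (Kpart b.dropLast) = Ikpart rd (Kpart b.dropLast + 1) :=
    rdE_Ikpart_ge h1 hk (by omega) (by omega)
  have hmono : Ikpart rd (Kpart b) ≤ Ikpart rd (Kpart b.dropLast + 1) :=
    Ikpart_mono hrP.1 (by omega) (by omega)
  show Kpart b + Ikpart rd (Kpart b)
      ≤ Kpart b.dropLast + Ikpart (rdE (Kpart b) rd) (Kpart b.dropLast)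
  rw [hIk]
  omega

lemma strip_total (hI : Inv R s) (hC : Cond R s) : total (stripS s) = total s := by
  obtain ⟨b, rd, g⟩ := s
  have hbP : IsPtn b := hI.hb
  have hrP : IsPtn rd := hI.hr
  have hgP : IsPtn g := hI.hg
  obtain ⟨h1, hk, h3, -⟩ := classC_facts hI hC.1
  have hlm : g.length ≤ mOf (b, rd, g) := hI.hlm hC.1
  rw [mOf_comp] at hlm
  have hbs : b.dropLast.sum + Kpart b = b.sum := sum_dropLast b hC.1.1
  have hrs : (rdE (Kpart b) rd).sum + Ikpart rd (Kpart b) = rd.sum := rdE_sum h1 hk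
  have hgs : (gUp (Kpart b + Ikpart rd (Kpart b)) g).sum
      = g.sum + (Kpart b + Ikpart rd (Kpart b)) := gUp_sum (by omega)
  show b.dropLast.sum + (rdE (Kpart b) rd).sum + (gUp (Kpart b + Ikpart rd (Kpart b)) g).sum
      = b.sum + rd.sum + g.sum
  omega

lemma strip_gNotB (hI : Inv R s) (hC : Cond R s) (hR : 2 ≤ R) :
    ¬ MemB R R (stripS s).2.2 := by
  obtain ⟨b, rd, g⟩ := s
  have hbP : IsPtn b := hI.hb
  have hrP : IsPtn rd := hI.hr
  have hgP : IsPtn g := hI.hg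
  obtain ⟨h1, hk, h3, -⟩ := classC_facts hI hC.1
  have hlm : g.length ≤ mOf (b, rd, g) := hI.hlm hC.1
  rw [mOf_comp] at hlm
  set m := Kpart b + Ikpart rd (Kpart b) with hm
  have hc1 : (gUp m g).count 1 = m - g.length := gUp_count_one hgP.2
  have hc2 : (gUp m g).count 2 = g.count 1 := gUp_count_succ m g (le_refl 1)
  intro hMB
  have hMB' : MemB R R (gUp m g) := hMB
  by_cases hB : MemB R R g
  · -- old green is in B: equality holds, window 1 of new green is exactly R
    have heq : R + Vg g ≤ m := by
      have h9 := hI.hBm hB hC.1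
      rwa [mOf_comp] at h9
    have hle : m ≤ R + Vg g := by
      have := hC.2
      rwa [mOf_comp] at this
    have hc1' : g.count 1 ≤ g.length := List.count_le_length
    have hwnd : (gUp m g).count 1 + (gUp m g).count 2 = R := by
      rw [hc1, hc2]
      unfold Vg at heq hle
      omega
    have hgw := gordon_to_wnd hMB'.1 hMB'.2.1 (by omega) (le_refl 1)
    norm_num at hgw
    omega
  · -- old green not in B: its violating window shifts up
    obtain ⟨u, hu, hwnd⟩ := notB_exists_window hgP (by omega) hB
    have hs1 : (gUp m g).count (u+1) = g.count u := gUp_count_succ m g hu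
    have hs2 : (gUp m g).count (u+1+1) = g.count (u+1) := gUp_count_succ m g (by omega)
    have := gordon_to_wnd hMB'.1 hMB'.2.1 (by omega) (show 1 ≤ u+1 by omega)
    omega

lemma strip_inv (hI : Inv R s) (hC : Cond R s) (hR : 2 ≤ R) : Inv R (stripS s) := by
  obtain ⟨b, rd, g⟩ := s
  have hbP : IsPtn b := hI.hb
  have hrP : IsPtn rd := hI.hr
  have hgP : IsPtn g := hI.hg
  obtain ⟨h1, hk, h3, -⟩ := classC_facts hI hC.1
  have hlm : g.length ≤ mOf (b, rd, g) := hI.hlm hC.1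
  rw [mOf_comp] at hlm
  have hstC : mOf (b, rd, g) ≤ R + Vg g := hC.2
  rw [mOf_comp] at hstC
  set m := Kpart b + Ikpart rd (Kpart b) with hm
  constructor
  case hb =>
    show IsPtn b.dropLast
    exact ⟨hbP.1.sublist (List.dropLast_sublist b),
      fun x hx => hbP.2 x ((List.dropLast_sublist b).mem hx)⟩
  case hr =>
    show IsPtn (rdE (Kpart b) rd)
    exact ⟨rdE_sorted hrP.1,
      fun x hx => hrP.2 x ((rdE_sublist (Kpart b) rd).mem hx)⟩
  case hg =>
    show IsPtn (gUp m g)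
    exact gUp_isPtn hgP m
  case hw =>
    intro v hv
    show (gUp m g).count v + (gUp m g).count (v+1) ≤ R
    rcases Nat.eq_or_lt_of_le hv with rfl | hv2
    · show (gUp m g).count 1 + (gUp m g).count 2 ≤ R
      have hc1 : (gUp m g).count 1 = m - g.length := gUp_count_one hgP.2
      have hc2 : (gUp m g).count 2 = g.count 1 := gUp_count_succ m g (le_refl 1)
      have hcl : g.count 1 ≤ g.length := List.count_le_length
      unfold Vg at hstC
      omega
    · have hs1 : (gUp m g).count v = g.count (v-1) := by
        have := gUp_count_succ m g (v := v - 1) (by omega)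
        have hve : v - 1 + 1 = v := by omega
        rwa [hve] at this
      have hs2 : (gUp m g).count (v+1) = g.count v := gUp_count_succ m g (by omega)
      have hwv : g.count (v-1) + g.count (v-1+1) ≤ R := hI.hw (v-1) (by omega)
      have hve : v - 1 + 1 = v := by omega
      rw [hve] at hwv
      omega
  case hlm =>
    intro hCl'
    have hle := strip_m_le hI hC.1 hCl'
    have hglen : (gUp m g).length = m := gUp_length (by omega)
    show (gUp m g).length ≤ mOf (stripS (b, rd, g))
    rw [hglen]
    calc m = mOf (b, rd, g) := by rw [mOf_comp]
    _ ≤ mOf (stripS (b, rd, g)) := hle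
  case hBm =>
    intro hMB _
    exact absurd hMB (strip_gNotB hI hC hR)

end Strip

lemma peelS_comp {b rd g : List ℕ} :
    peelS (b, rd, g) = (b ++ [kSel rd g.length],
      rdI (kSel rd g.length) (g.length - kSel rd g.length) rd, gDown g) := rfl

section Peel

variable {R : ℕ}

lemma glen_ge {g : List ℕ} (hg : IsPtn g) (hR : 2 ≤ R) (hNB : ¬ MemB R R g) :
    2 ≤ g.length := by
  obtain ⟨u, hu, hw⟩ := notB_exists_window hg (by omega) hNB
  have := counts_disjoint_le_length g (show u ≠ u + 1 by omega)
  omega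

lemma kSel_facts {b rd g : List ℕ} (hI : Inv R (b, rd, g)) (hNB : ¬ MemB R R g)
    (hR : 2 ≤ R) :
    1 ≤ kSel rd g.length ∧ kSel rd g.length ≤ rd.length + 1 ∧
      kSel rd g.length + Ikpart rd (kSel rd g.length - 1) ≤ g.length ∧
      kSel rd g.length + 1 ≤ g.length ∧
      (kSel rd g.length ≤ rd.length →
        g.length - kSel rd g.length ≤ Ikpart rd (kSel rd g.length)) ∧
      (2 ≤ kSel rd g.length →
        Ikpart rd (kSel rd g.length - 1) ≤ g.length - kSel rd g.length) ∧
      (b ≠ [] → kSel rd g.length ≤ Kpart b) := by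
  have hbP : IsPtn b := hI.hb
  have hrP : IsPtn rd := hI.hr
  have hgP : IsPtn g := hI.hg
  have hm2 : 2 ≤ g.length := glen_ge hgP hR hNB
  have P1 : (1:ℕ) + Ikpart rd (1-1) ≤ g.length := by
    rw [show (1:ℕ)-1 = 0 from rfl, Ikpart_zero]; omega
  have hk1 : 1 ≤ kSel rd g.length :=
    Nat.le_findGreatest (by omega) P1
  have hk2 : kSel rd g.length ≤ rd.length + 1 := Nat.findGreatest_le _
  have hPk : kSel rd g.length + Ikpart rd (kSel rd g.length - 1) ≤ g.length := by
    have := Nat.findGreatest_spec (P := fun k => k + Ikpart rd (k-1) ≤ g.length)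
      (show 1 ≤ rd.length + 1 by omega) P1
    exact this
  have hklt : kSel rd g.length + 1 ≤ g.length := by
    by_contra hcon
    push_neg at hcon
    have hkm : kSel rd g.length = g.length := by omega
    have hz : Ikpart rd (kSel rd g.length - 1) = 0 := by omega
    rcases Nat.lt_or_ge rd.length (kSel rd g.length - 1) with hcase | hcase
    · omega
    · have := Ikpart_pos hrP (show 1 ≤ kSel rd g.length - 1 by omega) hcase
      omega
  have hup : kSel rd g.length ≤ rd.length →
      g.length - kSel rd g.length ≤ Ikpart rd (kSel rd g.length) := by
    intro hkL
    have hng := Nat.findGreatest_is_greatest (P := fun k => k + Ikpart rd (k-1) ≤ g.length)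
      (show kSel rd g.length < kSel rd g.length + 1 by omega) (by omega)
    simp only [Nat.add_sub_cancel] at hng
    omega
  have hdn : 2 ≤ kSel rd g.length →
      Ikpart rd (kSel rd g.length - 1) ≤ g.length - kSel rd g.length := by
    intro _; omega
  refine ⟨hk1, hk2, hPk, hklt, hup, hdn, ?_⟩
  intro hb
  by_contra hcon
  push_neg at hcon
  have hKp : 1 ≤ Kpart b := Kpart_pos hbP hb
  rcases Nat.lt_or_ge rd.length (Kpart b) with hcase | hcase
  · omega
  · have hCl : ClassC (b, rd, g) := ⟨hb, hcase⟩
    have hlm : g.length ≤ Kpart b + Ikpart rd (Kpart b) := by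
      have := hI.hlm hCl
      rwa [mOf_comp] at this
    have hmono : Ikpart rd (Kpart b) ≤ Ikpart rd (kSel rd g.length - 1) :=
      Ikpart_mono hrP.1 (by omega) (by omega)
    omega

lemma peel_total {b rd g : List ℕ} (hI : Inv R (b, rd, g)) (hNB : ¬ MemB R R g)
    (hR : 2 ≤ R) : total (peelS (b, rd, g)) = total (b, rd, g) := by
  have hgP : IsPtn g := hI.hg
  obtain ⟨hk1, hk2, hPk, hklt, hup, hdn, hbk⟩ := kSel_facts hI hNB hR
  have h1 : (b ++ [kSel rd g.length]).sum = b.sum + kSel rd g.length := by simp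
  have h2 := rdI_sum (kSel rd g.length) (g.length - kSel rd g.length) rd
  have h3 := gDown_sum hgP
  show (b ++ [kSel rd g.length]).sum
      + (rdI (kSel rd g.length) (g.length - kSel rd g.length) rd).sum + (gDown g).sum
      = b.sum + rd.sum + g.sum
  rw [h1, h2]
  omega

lemma peel_mOf {b rd g : List ℕ} (hI : Inv R (b, rd, g)) (hNB : ¬ MemB R R g)
    (hR : 2 ≤ R) : mOf (peelS (b, rd, g)) = g.length := by
  obtain ⟨hk1, hk2, hPk, hklt, hup, hdn, hbk⟩ := kSel_facts hI hNB hR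
  show Kpart (b ++ [kSel rd g.length])
      + Ikpart (rdI (kSel rd g.length) (g.length - kSel rd g.length) rd)
        (Kpart (b ++ [kSel rd g.length])) = g.length
  rw [Kpart_append_singleton, rdI_Ikpart_self _ hk1 hk2]
  omega

lemma peel_inv {b rd g : List ℕ} (hI : Inv R (b, rd, g)) (hNB : ¬ MemB R R g)
    (hR : 2 ≤ R) : Inv R (peelS (b, rd, g)) := by
  have hbP : IsPtn b := hI.hb
  have hrP : IsPtn rd := hI.hr
  have hgP : IsPtn g := hI.hg
  obtain ⟨hk1, hk2, hPk, hklt, hup, hdn, hbk⟩ := kSel_facts hI hNB hR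
  have hwnd1 : g.count 1 + g.count 2 ≤ R := by
    have := hI.hw 1 (le_refl 1)
    norm_num at this
    exact this
  constructor
  case hb =>
    show IsPtn (b ++ [kSel rd g.length])
    constructor
    · rw [List.pairwise_append]
      refine ⟨hbP.1, by simp, ?_⟩
      intro a ha c hc
      rw [List.mem_singleton] at hc
      subst hc
      have hane : b ≠ [] := by intro h; rw [h] at ha; simp at ha
      have := Kpart_le_mem hbP.1 ha
      have := hbk hane
      omega
    · intro x hx
      rcases List.mem_append.1 hx with h | h
      · exact hbP.2 x h
      · rw [List.mem_singleton] at h; omega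
  case hr =>
    show IsPtn (rdI (kSel rd g.length) (g.length - kSel rd g.length) rd)
    constructor
    · exact rdI_sorted hrP.1 hk1 hk2 hup hdn
    · intro x hx
      rw [rdI] at hx
      rcases List.mem_append.1 hx with h | h
      · exact hrP.2 x ((List.take_sublist _ _).mem h)
      · rcases List.mem_cons.1 h with rfl | h2
        · omega
        · exact hrP.2 x ((List.drop_sublist _ _).mem h2)
  case hg => exact gDown_isPtn hgP
  case hw =>
    intro v hv
    show (gDown g).count v + (gDown g).count (v+1) ≤ R
    rw [gDown_count hv, gDown_count (by omega)]
    exact hI.hw (v+1) (by omega)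
  case hlm =>
    intro _
    have hm := peel_mOf hI hNB hR
    show (gDown g).length ≤ mOf (peelS (b, rd, g))
    rw [hm, gDown_length]
    omega
  case hBm =>
    intro hMB _
    have hMB' : MemB R R (gDown g) := hMB
    have hm := peel_mOf hI hNB hR
    obtain ⟨u, hu, hw⟩ := notB_exists_window hgP (by omega) hNB
    have hu1 : u = 1 := by
      by_contra hne
      have hu2 : 2 ≤ u := by omega
      have hgd : (gDown g).count (u-1) + (gDown g).count (u-1+1) ≤ R - 1 :=
        gordon_to_wnd hMB'.1 hMB'.2.1 (by omega) (by omega)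
      rw [gDown_count (by omega), gDown_count (by omega)] at hgd
      have e1 : u - 1 + 1 = u := by omega
      rw [e1] at hgd
      omega
    subst hu1
    have hdle := counts_disjoint_le_length g (show (1:ℕ) ≠ 2 by omega)
    show R + Vg (gDown g) ≤ mOf (peelS (b, rd, g))
    rw [hm]
    unfold Vg
    rw [gDown_length, gDown_count (le_refl 1)]
    norm_num at hw ⊢
    omega
  
lemma peel_cond {b rd g : List ℕ} (hI : Inv R (b, rd, g)) (hNB : ¬ MemB R R g)
    (hR : 2 ≤ R) : Cond R (peelS (b, rd, g)) := by
  have hgP : IsPtn g := hI.hg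
  obtain ⟨hk1, hk2, hPk, hklt, hup, hdn, hbk⟩ := kSel_facts hI hNB hR
  have hm := peel_mOf hI hNB hR
  have hwnd1 : g.count 1 + g.count 2 ≤ R := by
    have := hI.hw 1 (le_refl 1)
    norm_num at this
    exact this
  have hdle := counts_disjoint_le_length g (show (1:ℕ) ≠ 2 by omega)
  constructor
  · constructor
    · show b ++ [kSel rd g.length] ≠ []
      simp
    · show Kpart (b ++ [kSel rd g.length])
        ≤ (rdI (kSel rd g.length) (g.length - kSel rd g.length) rd).length
      rw [Kpart_append_singleton, rdI_length]
      omega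
  · rw [hm]
    show g.length ≤ R + Vg (gDown g)
    unfold Vg
    rw [gDown_length, gDown_count (le_refl 1)]
    norm_num
    omega

lemma strip_peel {b rd g : List ℕ} (hI : Inv R (b, rd, g)) (hNB : ¬ MemB R R g)
    (hR : 2 ≤ R) : stripS (peelS (b, rd, g)) = (b, rd, g) := by
  have hgP : IsPtn g := hI.hg
  obtain ⟨hk1, hk2, hPk, hklt, hup, hdn, hbk⟩ := kSel_facts hI hNB hR
  rw [peelS_comp, stripS_comp, Kpart_append_singleton]
  rw [List.dropLast_concat, rdE_rdI hk1 hk2, rdI_Ikpart_self _ hk1 hk2]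
  have he : kSel rd g.length + (g.length - kSel rd g.length) = g.length := by omega
  rw [he, gUp_gDown hgP]

end Peel

section RT1

variable {R : ℕ}

lemma kSel_strip {b rd g : List ℕ} (hI : Inv R (b, rd, g)) (hC : Cond R (b, rd, g)) :
    kSel (rdE (Kpart b) rd) (Kpart b + Ikpart rd (Kpart b)) = Kpart b := by
  have hbP : IsPtn b := hI.hb
  have hrP : IsPtn rd := hI.hr
  obtain ⟨h1, hk, h3, -⟩ := classC_facts hI hC.1
  have hLE : (rdE (Kpart b) rd).length = rd.length - 1 := rdE_length h1 hk
  unfold kSel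
  rw [hLE]
  have hbound : rd.length - 1 + 1 = rd.length := by omega
  rw [hbound]
  rw [Nat.findGreatest_eq_iff]
  refine ⟨hk, ?_, ?_⟩
  · intro _
    rcases Nat.eq_or_lt_of_le h1 with h1e | h1lt
    · rw [← h1e, show (1:ℕ) - 1 = 0 from rfl, Ikpart_zero]
      omega
    · have he : Ikpart (rdE (Kpart b) rd) (Kpart b - 1) = Ikpart rd (Kpart b - 1) :=
        rdE_Ikpart_lt h1 hk (by omega) (by omega)
      have hmono : Ikpart rd (Kpart b - 1) ≤ Ikpart rd (Kpart b) :=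
        Ikpart_mono hrP.1 (by omega) (by omega)
      rw [he]
      omega
  · intro n hn hn'
    have he : Ikpart (rdE (Kpart b) rd) (n - 1) = Ikpart rd n := by
      have := rdE_Ikpart_ge (rd := rd) h1 hk (show Kpart b ≤ n - 1 by omega)
        (show n - 1 ≤ rd.length - 1 by omega)
      have hne : n - 1 + 1 = n := by omega
      rwa [hne] at this
    have hmono : Ikpart rd (Kpart b) ≤ Ikpart rd n := Ikpart_mono hrP.1 (by omega) (by omega)
    rw [he]
    omega

lemma peel_strip {b rd g : List ℕ} (hI : Inv R (b, rd, g)) (hC : Cond R (b, rd, g)) :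
    peelS (stripS (b, rd, g)) = (b, rd, g) := by
  have hbP : IsPtn b := hI.hb
  have hrP : IsPtn rd := hI.hr
  have hgP : IsPtn g := hI.hg
  obtain ⟨h1, hk, h3, -⟩ := classC_facts hI hC.1
  have hlm : g.length ≤ Kpart b + Ikpart rd (Kpart b) := by
    have := hI.hlm hC.1
    rwa [mOf_comp] at this
  have hmlen : (gUp (Kpart b + Ikpart rd (Kpart b)) g).length = Kpart b + Ikpart rd (Kpart b) :=
    gUp_length (by omega)
  rw [stripS_comp, peelS_comp, hmlen, kSel_strip hI hC]
  have hb2 : b.dropLast ++ [Kpart b] = b := by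
    rw [Kpart_eq_getLast b hC.1.1]
    exact List.dropLast_append_getLast _
  have hi : Kpart b + Ikpart rd (Kpart b) - Kpart b = Ikpart rd (Kpart b) := by omega
  rw [hb2, hi, rdI_rdE h1 hk, gDown_gUp hgP]

end RT1

/- ---------- the loops ---------- -/

noncomputable def PhiF (R : ℕ) : ℕ → St → St
  | 0, s => s
  | (f+1), s =>
    haveI := Classical.propDecidable (Cond R s)
    if Cond R s then PhiF R f (stripS s) else s

noncomputable def PsiF (R : ℕ) : ℕ → St → St
  | 0, s => s
  | (f+1), s =>
    haveI := Classical.propDecidable (MemB R R s.2.2)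
    if MemB R R s.2.2 then s else PsiF R f (peelS s)

noncomputable def PhiM (R : ℕ) (s : St) : St := PhiF R s.1.length s

noncomputable def PsiM (R : ℕ) (s : St) : St := PsiF R s.2.2.sum s

section Loops

variable {R : ℕ}

lemma PhiF_succ_pos {f : ℕ} {s : St} (h : Cond R s) :
    PhiF R (f+1) s = PhiF R f (stripS s) := by
  show (haveI := Classical.propDecidable (Cond R s)
    if Cond R s then PhiF R f (stripS s) else s) = _
  rw [if_pos h]

lemma PhiF_succ_neg {f : ℕ} {s : St} (h : ¬ Cond R s) : PhiF R (f+1) s = s := by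
  show (haveI := Classical.propDecidable (Cond R s)
    if Cond R s then PhiF R f (stripS s) else s) = _
  rw [if_neg h]

lemma PsiF_succ_pos {f : ℕ} {s : St} (h : MemB R R s.2.2) : PsiF R (f+1) s = s := by
  show (haveI := Classical.propDecidable (MemB R R s.2.2)
    if MemB R R s.2.2 then s else PsiF R f (peelS s)) = _
  rw [if_pos h]

lemma PsiF_succ_neg {f : ℕ} {s : St} (h : ¬ MemB R R s.2.2) :
    PsiF R (f+1) s = PsiF R f (peelS s) := by
  show (haveI := Classical.propDecidable (MemB R R s.2.2)
    if MemB R R s.2.2 then s else PsiF R f (peelS s)) = _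
  rw [if_neg h]

lemma PhiF_stable {f : ℕ} {s : St} (h : ¬ Cond R s) : PhiF R f s = s := by
  cases f with
  | zero => rfl
  | succ f => exact PhiF_succ_neg h

lemma PsiF_stable {f : ℕ} {s : St} (h : MemB R R s.2.2) : PsiF R f s = s := by
  induction f with
  | zero => rfl
  | succ f ih => exact PsiF_succ_pos h

lemma Phi_id {s : St} (h : ¬ Cond R s) : PhiM R s = s := PhiF_stable h

lemma Psi_id {s : St} (h : MemB R R s.2.2) : PsiM R s = s := PsiF_stable h

lemma sum_zero_nil {g : List ℕ} (hg : IsPtn g) (h : g.sum = 0) : g = [] := by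
  cases g with
  | nil => rfl
  | cons a t =>
    have := hg.2 a (by simp)
    simp only [List.sum_cons] at h
    omega

lemma memB_nil : MemB R R ([] : List ℕ) := by
  refine ⟨⟨List.Pairwise.nil, by simp⟩, ?_, by simp⟩
  intro j hj
  simp at hj

lemma notB_sum_pos {s : St} (hI : Inv R s) (h : ¬ MemB R R s.2.2) : 1 ≤ s.2.2.sum := by
  rcases Nat.eq_zero_or_pos s.2.2.sum with h0 | h1
  · exact absurd (sum_zero_nil hI.hg h0 ▸ memB_nil) h
  · exact h1

lemma peel_sum_lt {b rd g : List ℕ} (hI : Inv R (b, rd, g)) (h : ¬ MemB R R g)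
    (hR : 2 ≤ R) : (gDown g).sum + 1 ≤ g.sum := by
  have hgP : IsPtn g := hI.hg
  have := gDown_sum hgP
  have hlen := glen_ge hgP hR h
  omega

lemma PsiF_fuel : ∀ f1 : ℕ, ∀ {f2 : ℕ} {s : St}, Inv R s → 2 ≤ R →
    s.2.2.sum ≤ f1 → s.2.2.sum ≤ f2 → PsiF R f1 s = PsiF R f2 s := by
  intro f1
  induction f1 with
  | zero =>
    intro f2 s hI hR h1 h2
    have hnil : s.2.2 = [] := sum_zero_nil hI.hg (by omega)
    have hB : MemB R R s.2.2 := by rw [hnil]; exact memB_nil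
    rw [PsiF_stable hB, PsiF_stable hB]
  | succ f1 ih =>
    intro f2 s hI hR h1 h2
    by_cases hB : MemB R R s.2.2
    · rw [PsiF_stable hB, PsiF_stable hB]
    · have hpos := notB_sum_pos hI hB
      obtain ⟨b, rd, g⟩ := s
      have hsum : (b, rd, g).2.2.sum = g.sum := rfl
      rcases f2 with _ | f2'
      · omega
      rw [PsiF_succ_neg hB, PsiF_succ_neg hB]
      have hlt := peel_sum_lt hI hB hR
      exact ih (peel_inv hI hB hR) hR (by
          show (gDown g).sum ≤ f1
          omega) (by
          show (gDown g).sum ≤ f2'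
          omega)
  
lemma Psi_unfold {s : St} (hI : Inv R s) (hR : 2 ≤ R) (h : ¬ MemB R R s.2.2) :
    PsiM R s = PsiM R (peelS s) := by
  have hpos := notB_sum_pos hI h
  obtain ⟨b, rd, g⟩ := s
  have hsum : (b, rd, g).2.2.sum = g.sum := rfl
  have hlt := peel_sum_lt hI h hR
  unfold PsiM
  have h1 : g.sum = (g.sum - 1) + 1 := by
    show (b, rd, g).2.2.sum = _
    omega
  rw [show (b, rd, g).2.2.sum = g.sum from rfl, h1, PsiF_succ_neg h]
  exact PsiF_fuel (g.sum - 1) (peel_inv hI h hR) hR (by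
      show (gDown g).sum ≤ g.sum - 1
      omega) (le_refl _)

lemma phi_good (hR : 2 ≤ R) : ∀ f : ℕ, ∀ s : St, Inv R s → s.1.length ≤ f →
    Inv R (PhiF R f s) ∧ total (PhiF R f s) = total s ∧ ¬ Cond R (PhiF R f s) ∧
      PsiM R (PhiF R f s) = PsiM R s := by
  intro f
  induction f with
  | zero =>
    intro s hI hlen
    have hb : s.1 = [] := List.length_eq_zero_iff.1 (by omega)
    have hnc : ¬ Cond R s := by
      intro hc
      exact hc.1.1 hb
    exact ⟨hI, rfl, hnc, rfl⟩
  | succ f ih =>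
    intro s hI hlen
    by_cases hc : Cond R s
    · rw [PhiF_succ_pos hc]
      have hI' := strip_inv hI hc hR
      have hblen : (stripS s).1.length ≤ f := by
        obtain ⟨b, rd, g⟩ := s
        have hbne : b ≠ [] := hc.1.1
        have hsl : (b, rd, g).1.length = b.length := rfl
        have : (stripS (b, rd, g)).1.length = b.length - 1 := by
          show b.dropLast.length = b.length - 1
          simp
        rw [this]
        have := List.length_pos_iff.2 hbne
        omega
      obtain ⟨a1, a2, a3, a4⟩ := ih (stripS s) hI' hblen
      refine ⟨a1, ?_, a3, ?_⟩
      · rw [a2, strip_total hI hc]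
      · rw [a4]
        have hnb : ¬ MemB R R (stripS s).2.2 := strip_gNotB hI hc hR
        rw [Psi_unfold hI' hR hnb]
        obtain ⟨b, rd, g⟩ := s
        rw [peel_strip hI hc]
    · rw [PhiF_succ_neg hc]
      exact ⟨hI, rfl, hc, rfl⟩

lemma psi_good (hR : 2 ≤ R) : ∀ f : ℕ, ∀ s : St, Inv R s → s.2.2.sum ≤ f →
    Inv R (PsiF R f s) ∧ total (PsiF R f s) = total s ∧ MemB R R (PsiF R f s).2.2 ∧
      PhiM R (PsiF R f s) = PhiM R s := by
  intro f
  induction f with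
  | zero =>
    intro s hI hlen
    have hnil : s.2.2 = [] := sum_zero_nil hI.hg (by omega)
    have hB : MemB R R s.2.2 := by rw [hnil]; exact memB_nil
    exact ⟨hI, rfl, hB, rfl⟩
  | succ f ih =>
    intro s hI hlen
    by_cases hB : MemB R R s.2.2
    · rw [PsiF_succ_pos hB]
      exact ⟨hI, rfl, hB, rfl⟩
    · rw [PsiF_succ_neg hB]
      obtain ⟨b, rd, g⟩ := s
      have hI' := peel_inv hI hB hR
      have hslen : (peelS (b, rd, g)).2.2.sum ≤ f := by
        have := peel_sum_lt hI hB hR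
        show (gDown g).sum ≤ f
        have hsum : (b, rd, g).2.2.sum = g.sum := rfl
        omega
      obtain ⟨a1, a2, a3, a4⟩ := ih (peelS (b, rd, g)) hI' hslen
      refine ⟨a1, ?_, a3, ?_⟩
      · rw [a2, peel_total hI hB hR]
      · rw [a4]
        have hcond : Cond R (peelS (b, rd, g)) := peel_cond hI hB hR
        have hstrip : stripS (peelS (b, rd, g)) = (b, rd, g) := strip_peel hI hB hR
        unfold PhiM
        have hblen : (peelS (b, rd, g)).1.length = b.length + 1 := by
          show (b ++ [kSel rd g.length]).length = b.length + 1
          simp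
        rw [hblen, PhiF_succ_pos hcond, hstrip]

end Loops

section Bridge

variable {R : ℕ}

lemma Vg_def (g : List ℕ) : Vg g = g.length - g.count 1 := rfl

def MemF' (R : ℕ) (b rd g : List ℕ) : Prop :=
  IsPtn b ∧ IsPtn rd ∧ IsPtn g ∧ MemB R R g ∧
    ((b = [] ∨ rd = [])
     ∨ (b ≠ [] ∧ rd ≠ [] ∧ g = [] ∧
         (rd.length ≤ Kpart b - 1 ∨
          (Kpart b ≤ rd.length ∧ R ≤ Kpart b + Ikpart rd (Kpart b))))
     ∨ (b ≠ [] ∧ rd ≠ [] ∧ g ≠ [] ∧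
         (rd.length ≤ Kpart b - 1 ∨
          (Kpart b ≤ rd.length ∧ R ≤ Kpart b + Ikpart rd (Kpart b) ∧
           g.length - g.count 1 < Kpart b + Ikpart rd (Kpart b) - R + 1))))

lemma inv_of_memF' (hR : 2 ≤ R) {b rd g : List ℕ} (h : MemF' R b rd g) :
    Inv R (b, rd, g) := by
  obtain ⟨hb, hrd, hg, hB, hdis⟩ := h
  have hwnd : ∀ v, 1 ≤ v → g.count v + g.count (v+1) ≤ R - 1 := by
    intro v hv
    exact gordon_to_wnd hg hB.2.1 (by omega) hv
  have hc1 : g.count 1 ≤ R - 1 := hB.2.2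
  constructor
  case hb => exact hb
  case hr => exact hrd
  case hg => exact hg
  case hw =>
    intro v hv
    show g.count v + g.count (v+1) ≤ R
    have := hwnd v hv
    omega
  case hlm =>
    intro hCl
    obtain ⟨hbne, hkL⟩ := hCl
    have hbne' : b ≠ [] := hbne
    have hkL' : Kpart b ≤ rd.length := hkL
    have hk1 : 1 ≤ Kpart b := Kpart_pos hb hbne'
    have hrne : rd ≠ [] := by
      intro hh; rw [hh] at hkL'; simp at hkL'; omega
    show g.length ≤ mOf (b, rd, g)
    rw [mOf_comp]
    rcases hdis with (hbnil | hrnil) | hcase | hcase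
    · exact absurd hbnil hbne'
    · exact absurd hrnil hrne
    · rw [hcase.2.2.1]; simp
    · obtain ⟨-, -, hgne, hsub⟩ := hcase
      rcases hsub with hL | ⟨-, hRm, hVg⟩
      · omega
      · have hcl : g.count 1 ≤ g.length := List.count_le_length
        omega
  case hBm =>
    intro _ hCl
    obtain ⟨hbne, hkL⟩ := hCl
    have hbne' : b ≠ [] := hbne
    have hkL' : Kpart b ≤ rd.length := hkL
    have hk1 : 1 ≤ Kpart b := Kpart_pos hb hbne'
    have hrne : rd ≠ [] := by
      intro hh; rw [hh] at hkL'; simp at hkL'; omega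
    show R + Vg g ≤ mOf (b, rd, g)
    rw [mOf_comp, Vg_def]
    rcases hdis with (hbnil | hrnil) | hcase | hcase
    · exact absurd hbnil hbne'
    · exact absurd hrnil hrne
    · obtain ⟨-, -, hgnil, hsub⟩ := hcase
      rcases hsub with hL | ⟨-, hRm⟩
      · omega
      · rw [hgnil]; simp; omega
    · obtain ⟨-, -, hgne, hsub⟩ := hcase
      rcases hsub with hL | ⟨-, hRm, hVg⟩
      · omega
      · omega

lemma inv_of_memF_succ (hR : 2 ≤ R) {b rd g : List ℕ} (h : MemF' (R+1) b rd g) :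
    Inv R (b, rd, g) ∧ ¬ Cond R (b, rd, g) := by
  obtain ⟨hb, hrd, hg, hB, hdis⟩ := h
  have hwnd : ∀ v, 1 ≤ v → g.count v + g.count (v+1) ≤ R := by
    intro v hv
    have := gordon_to_wnd hg hB.2.1 (show 1 ≤ R + 1 by omega) hv
    omega
  have hc1 : g.count 1 ≤ R := by have := hB.2.2; omega
  have key : ClassC (b, rd, g) → R + 1 + Vg g ≤ mOf (b, rd, g) := by
    intro hCl
    obtain ⟨hbne, hkL⟩ := hCl
    have hbne' : b ≠ [] := hbne
    have hkL' : Kpart b ≤ rd.length := hkL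
    have hk1 : 1 ≤ Kpart b := Kpart_pos hb hbne'
    have hrne : rd ≠ [] := by
      intro hh; rw [hh] at hkL'; simp at hkL'; omega
    rw [mOf_comp, Vg_def]
    rcases hdis with (hbnil | hrnil) | hcase | hcase
    · exact absurd hbnil hbne'
    · exact absurd hrnil hrne
    · obtain ⟨-, -, hgnil, hsub⟩ := hcase
      rcases hsub with hL | ⟨-, hRm⟩
      · omega
      · rw [hgnil]; simp; omega
    · obtain ⟨-, -, hgne, hsub⟩ := hcase
      rcases hsub with hL | ⟨-, hRm, hVg⟩
      · omega
      · omega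
  constructor
  · constructor
    case hb => exact hb
    case hr => exact hrd
    case hg => exact hg
    case hw => exact hwnd
    case hlm =>
      intro hCl
      have hcl : g.count 1 ≤ g.length := List.count_le_length
      have := key hCl
      rw [Vg_def] at this
      show g.length ≤ mOf (b, rd, g)
      omega
    case hBm =>
      intro _ hCl
      have := key hCl
      show R + Vg g ≤ mOf (b, rd, g)
      omega
  · intro hC
    have := key hC.1
    have h2 := hC.2
    show False
    have hVg : Vg (b, rd, g).2.2 = Vg g := rfl
    rw [hVg] at h2
    omega

lemma memF_of_inv_notCond (hR : 2 ≤ R) {b rd g : List ℕ} (hI : Inv R (b, rd, g))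
    (hnc : ¬ Cond R (b, rd, g)) : MemF' (R+1) b rd g := by
  have hbP : IsPtn b := hI.hb
  have hrP : IsPtn rd := hI.hr
  have hgP : IsPtn g := hI.hg
  have hw : ∀ v, 1 ≤ v → g.count v + g.count (v+1) ≤ R := fun v hv => hI.hw v hv
  have hw1 := hw 1 (le_refl 1)
  refine ⟨hbP, hrP, hgP, ⟨hgP, wnd_to_gordon hgP (by omega) (fun v hv => by
      have := hw v hv; omega), by omega⟩, ?_⟩
  by_cases hbne : b = []
  · exact Or.inl (Or.inl hbne)
  by_cases hrne : rd = []
  · exact Or.inl (Or.inr hrne)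
  have hk1 : 1 ≤ Kpart b := Kpart_pos hbP hbne
  by_cases hkL : Kpart b ≤ rd.length
  · have hCl : ClassC (b, rd, g) := ⟨hbne, hkL⟩
    have hm : ¬ (mOf (b, rd, g) ≤ R + Vg (b, rd, g).2.2) := fun hh => hnc ⟨hCl, hh⟩
    have hm' : R + (g.length - g.count 1) + 1 ≤ Kpart b + Ikpart rd (Kpart b) := by
      rw [mOf_comp] at hm
      have hVg : Vg (b, rd, g).2.2 = g.length - g.count 1 := rfl
      rw [hVg] at hm
      omega
    by_cases hgne : g = []
    · refine Or.inr (Or.inl ⟨hbne, hrne, hgne, Or.inr ⟨hkL, ?_⟩⟩)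
      rw [hgne] at hm'
      simp at hm'
      omega
    · refine Or.inr (Or.inr ⟨hbne, hrne, hgne, Or.inr ⟨hkL, ?_, ?_⟩⟩)
      · omega
      · omega
  · by_cases hgne : g = []
    · exact Or.inr (Or.inl ⟨hbne, hrne, hgne, Or.inl (by omega)⟩)
    · exact Or.inr (Or.inr ⟨hbne, hrne, hgne, Or.inl (by omega)⟩)

lemma memF_of_inv_memB (hR : 2 ≤ R) {b rd g : List ℕ} (hI : Inv R (b, rd, g))
    (hB : MemB R R g) : MemF' R b rd g := by
  have hbP : IsPtn b := hI.hb
  have hrP : IsPtn rd := hI.hr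
  have hgP : IsPtn g := hI.hg
  refine ⟨hbP, hrP, hgP, hB, ?_⟩
  by_cases hbne : b = []
  · exact Or.inl (Or.inl hbne)
  by_cases hrne : rd = []
  · exact Or.inl (Or.inr hrne)
  have hk1 : 1 ≤ Kpart b := Kpart_pos hbP hbne
  by_cases hkL : Kpart b ≤ rd.length
  · have hCl : ClassC (b, rd, g) := ⟨hbne, hkL⟩
    have hm := hI.hBm hB hCl
    have hm' : R + (g.length - g.count 1) ≤ Kpart b + Ikpart rd (Kpart b) := by
      rw [mOf_comp] at hm
      have hVg : Vg (b, rd, g).2.2 = g.length - g.count 1 := rfl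
      rw [hVg] at hm
      omega
    by_cases hgne : g = []
    · exact Or.inr (Or.inl ⟨hbne, hrne, hgne, Or.inr ⟨hkL, by omega⟩⟩)
    · exact Or.inr (Or.inr ⟨hbne, hrne, hgne, Or.inr ⟨hkL, by omega, by omega⟩⟩)
  · by_cases hgne : g = []
    · exact Or.inr (Or.inl ⟨hbne, hrne, hgne, Or.inl (by omega)⟩)
    · exact Or.inr (Or.inr ⟨hbne, hrne, hgne, Or.inl (by omega)⟩)

end Bridge

end CY5

/-- membership in the family `F_r` of 3-colored partitions. -/
def MemF (R : ℕ) (b rd g : List ℕ) : Prop :=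
  IsPtn b ∧ IsPtn rd ∧ IsPtn g ∧ MemB R R g ∧
    ((b = [] ∨ rd = [])
     ∨ (b ≠ [] ∧ rd ≠ [] ∧ g = [] ∧
         (rd.length ≤ Kpart b - 1 ∨
          (Kpart b ≤ rd.length ∧ R ≤ Kpart b + Ikpart rd (Kpart b))))
     ∨ (b ≠ [] ∧ rd ≠ [] ∧ g ≠ [] ∧
         (rd.length ≤ Kpart b - 1 ∨
          (Kpart b ≤ rd.length ∧ R ≤ Kpart b + Ikpart rd (Kpart b) ∧
           g.length - g.count 1 < Kpart b + Ikpart rd (Kpart b) - R + 1))))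

/-- `F_R(n)`: the number of 3-colored partitions of total size `n` in `F_R`. -/
noncomputable def Fcount (R n : ℕ) : ℕ :=
  Set.ncard {t : List ℕ × List ℕ × List ℕ |
    MemF R t.1 t.2.1 t.2.2 ∧ t.1.sum + t.2.1.sum + t.2.2.sum = n}

/-- `F_r(n)` is independent of `r ≥ 2`. -/
theorem Fcount_succ (r n : ℕ) (hr : 2 ≤ r) : Fcount r n = Fcount (r + 1) n := by
  classical
  have hMF : ∀ (R : ℕ) (b rd g : List ℕ), MemF R b rd g ↔ CY5.MemF' R b rd g :=
    fun _ _ _ _ => Iff.rfl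
  unfold Fcount
  set S1 : Set (List ℕ × List ℕ × List ℕ) := {t : List ℕ × List ℕ × List ℕ |
    MemF r t.1 t.2.1 t.2.2 ∧ t.1.sum + t.2.1.sum + t.2.2.sum = n} with hS1
  set S2 : Set (List ℕ × List ℕ × List ℕ) := {t : List ℕ × List ℕ × List ℕ |
    MemF (r+1) t.1 t.2.1 t.2.2 ∧ t.1.sum + t.2.1.sum + t.2.2.sum = n} with hS2
  have hmt1 : Set.MapsTo (CY5.PhiM r) S1 S2 := by
    rintro ⟨b, rd, g⟩ ⟨hmf, hsum⟩
    have hI := CY5.inv_of_memF' hr ((hMF r b rd g).1 hmf)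
    obtain ⟨a1, a2, a3, -⟩ := CY5.phi_good hr b.length (b, rd, g) hI (le_refl _)
    constructor
    · exact (hMF _ _ _ _).2 (CY5.memF_of_inv_notCond hr a1 a3)
    · show CY5.total (CY5.PhiM r (b, rd, g)) = n
      exact a2.trans hsum
  have hmt2 : Set.MapsTo (CY5.PsiM r) S2 S1 := by
    rintro ⟨b, rd, g⟩ ⟨hmf, hsum⟩
    obtain ⟨hI, hnc⟩ := CY5.inv_of_memF_succ hr ((hMF (r+1) b rd g).1 hmf)
    obtain ⟨a1, a2, a3, -⟩ := CY5.psi_good hr g.sum (b, rd, g) hI (le_refl _)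
    constructor
    · exact (hMF _ _ _ _).2 (CY5.memF_of_inv_memB hr a1 a3)
    · show CY5.total (CY5.PsiM r (b, rd, g)) = n
      exact a2.trans hsum
  have hinv1 : Set.LeftInvOn (CY5.PsiM r) (CY5.PhiM r) S1 := by
    rintro ⟨b, rd, g⟩ ⟨hmf, hsum⟩
    have hI := CY5.inv_of_memF' hr ((hMF r b rd g).1 hmf)
    obtain ⟨-, -, -, a4⟩ := CY5.phi_good hr b.length (b, rd, g) hI (le_refl _)
    have hB : MemB r r g := hmf.2.2.2.1
    exact a4.trans (CY5.Psi_id hB)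
  have hinv2 : Set.RightInvOn (CY5.PsiM r) (CY5.PhiM r) S2 := by
    rintro ⟨b, rd, g⟩ ⟨hmf, hsum⟩
    obtain ⟨hI, hnc⟩ := CY5.inv_of_memF_succ hr ((hMF (r+1) b rd g).1 hmf)
    obtain ⟨-, -, -, a4⟩ := CY5.psi_good hr g.sum (b, rd, g) hI (le_refl _)
    exact a4.trans (CY5.Phi_id hnc)
  have hbij : Set.BijOn (CY5.PhiM r) S1 S2 :=
    Set.InvOn.bijOn ⟨hinv1, hinv2⟩ hmt1 hmt2
  rw [← hbij.image_eq, Set.ncard_image_of_injOn hbij.injOn]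
end

section
/- For every integer r ≥ 2, Σ_{m=0}^{r−1} X_m = 1/(q)_{r−1} as formal power series; equivalently, the coefficient of q^n in Σ_{m=0}^{r−1} X_m equals the number of partitions of n with at most r−1 parts. -/
open PowerSeries Finset

/-- `(q)_n = (1−q)(1−q²)⋯(1−qⁿ)`, with `(q)_0 = 1`. -/
noncomputable def qPoch (n : ℕ) : PowerSeries ℚ :=
  ∏ j ∈ Finset.range n, (1 - (X : PowerSeries ℚ) ^ (j + 1))

/-- extend a tuple `(∂_1, …, ∂_{r−1})` by zero. -/
def dext (r : ℕ) (d : Fin (r - 1) → ℕ) (j : ℕ) : ℕ :=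
  if h : j < r - 1 then d ⟨j, h⟩ else 0

/-- `X_m`: the sum over tuples `∂_1 ≥ ⋯ ≥ ∂_{r−1} ≥ 0` with `∂_1+⋯+∂_{r−1}=m` of
`q^{∂_1²+⋯+∂_{r−1}²} / ((q)_{∂_1−∂_2} ⋯ (q)_{∂_{r−2}−∂_{r−1}} (q)_{∂_{r−1}})`. -/
noncomputable def Xm (r m : ℕ) : PowerSeries ℚ :=
  ∑ d ∈ (Finset.Nat.antidiagonalTuple (r - 1) m).filter
      (fun d => ∀ a b : Fin (r - 1), a ≤ b → d b ≤ d a),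
    (X : PowerSeries ℚ) ^ (∑ j ∈ Finset.range (r - 1), (dext r d j) ^ 2) *
      ∏ j ∈ Finset.range (r - 1), (qPoch (dext r d j - dext r d (j + 1)))⁻¹

noncomputable abbrev KK : Type := FractionRing (PowerSeries ℚ)

noncomputable def ii : PowerSeries ℚ →+* KK := algebraMap _ _

lemma ii_inj : Function.Injective ii := IsFractionRing.injective _ _

noncomputable def Qv : KK := ii PowerSeries.X

noncomputable def pq (n : ℕ) : KK := ii (qPoch n)

lemma qPoch_constCoeff (n : ℕ) : constantCoeff (qPoch n) = 1 := by
  rw [qPoch, map_prod]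
  apply Finset.prod_eq_one
  intro j _
  simp

lemma qPoch_ne_zero (n : ℕ) : qPoch n ≠ 0 := by
  intro h
  have := qPoch_constCoeff n
  rw [h, map_zero] at this
  exact zero_ne_one this

lemma pq_ne_zero (n : ℕ) : pq n ≠ 0 := by
  intro h
  exact qPoch_ne_zero n (ii_inj (show ii (qPoch n) = ii 0 by rw [map_zero]; exact h))

lemma pq_zero : pq 0 = 1 := by
  rw [pq, qPoch, Finset.range_zero, Finset.prod_empty, map_one]

lemma pq_succ (n : ℕ) : pq (n + 1) = pq n * (1 - Qv ^ (n + 1)) := by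
  rw [pq, pq, qPoch, qPoch, Finset.prod_range_succ, map_mul]
  congr 1
  rw [map_sub, map_one, map_pow]
  rfl

lemma one_sub_Qv_ne_zero (n : ℕ) : (1 : KK) - Qv ^ (n + 1) ≠ 0 := by
  intro h
  have h2 : ii (1 - PowerSeries.X ^ (n+1)) = 0 := by
    rw [map_sub, map_one, map_pow]; exact h
  have h3 : (1 : PowerSeries ℚ) - PowerSeries.X ^ (n+1) = 0 := ii_inj (by rw [h2, map_zero])
  have := congrArg (constantCoeff (R := ℚ)) h3
  simp at this

lemma ii_inv (φ : PowerSeries ℚ) (h : constantCoeff φ ≠ 0) : ii φ⁻¹ = (ii φ)⁻¹ := by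
  have h1 : φ⁻¹ * φ = 1 := PowerSeries.inv_mul_cancel φ h
  have h2 : ii φ⁻¹ * ii φ = 1 := by rw [← map_mul, h1, map_one]
  exact eq_inv_of_mul_eq_one_left h2

noncomputable def gb (n k : ℕ) : KK := if k ≤ n then pq n / (pq k * pq (n - k)) else 0

lemma gb_zero_right (n : ℕ) : gb n 0 = 1 := by
  rw [gb, if_pos (Nat.zero_le n)]
  rw [pq_zero, Nat.sub_zero, one_mul, div_self (pq_ne_zero n)]

lemma gb_diag (n : ℕ) : gb n n = 1 := by
  rw [gb, if_pos le_rfl, Nat.sub_self, pq_zero, mul_one, div_self (pq_ne_zero n)]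

lemma gb_eq_zero {n k : ℕ} (h : n < k) : gb n k = 0 := by
  rw [gb, if_neg (by omega)]

lemma gb_symm {t j : ℕ} (h : j ≤ t) : gb t (t - j) = gb t j := by
  rw [gb, gb, if_pos (by omega), if_pos h]
  have : t - (t - j) = j := by omega
  rw [this, mul_comm]

lemma pascal1 (n k : ℕ) : gb (n + 1) (k + 1) = Qv ^ (k + 1) * gb n (k + 1) + gb n k := by
  rcases lt_trichotomy n k with h | rfl | h
  · rw [gb_eq_zero (by omega), gb_eq_zero (by omega), gb_eq_zero (by omega)]
    ring
  · rw [gb_diag, gb_diag, gb_eq_zero (by omega)]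
    ring
  · -- k + 1 ≤ n
    obtain ⟨c, rfl⟩ : ∃ c, n = k + 1 + c := ⟨n - (k+1), by omega⟩
    rw [gb, gb, gb, if_pos (by omega), if_pos (by omega), if_pos (by omega)]
    have e1 : k + 1 + c + 1 - (k + 1) = c + 1 := by omega
    have e2 : k + 1 + c - (k + 1) = c := by omega
    have e3 : k + 1 + c - k = c + 1 := by omega
    rw [e1, e2, e3]
    have p1 : pq (k + 1 + c + 1) = pq (k + 1 + c) * (1 - Qv ^ (k + 1 + c + 1)) := pq_succ _
    have p2 : pq (k + 1) = pq k * (1 - Qv ^ (k + 1)) := pq_succ _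
    have p3 : pq (c + 1) = pq c * (1 - Qv ^ (c + 1)) := pq_succ _
    rw [p1, p2, p3]
    have h1 := pq_ne_zero (k + 1 + c)
    have h2 := pq_ne_zero k
    have h3 := pq_ne_zero c
    have h4 := one_sub_Qv_ne_zero k
    have h5 := one_sub_Qv_ne_zero c
    field_simp
    ring

lemma pascal2 (n k : ℕ) : gb (n + 1) (k + 1) = gb n (k + 1) + Qv ^ (n - k) * gb n k := by
  rcases lt_trichotomy n k with h | rfl | h
  · rw [gb_eq_zero (by omega), gb_eq_zero (by omega), gb_eq_zero (by omega)]
    ring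
  · rw [gb_diag, gb_diag, gb_eq_zero (by omega), Nat.sub_self]
    ring
  · obtain ⟨c, rfl⟩ : ∃ c, n = k + 1 + c := ⟨n - (k+1), by omega⟩
    rw [gb, gb, gb, if_pos (by omega), if_pos (by omega), if_pos (by omega)]
    have e1 : k + 1 + c + 1 - (k + 1) = c + 1 := by omega
    have e2 : k + 1 + c - (k + 1) = c := by omega
    have e3 : k + 1 + c - k = c + 1 := by omega
    rw [e1, e2, e3]
    have p1 : pq (k + 1 + c + 1) = pq (k + 1 + c) * (1 - Qv ^ (k + 1 + c + 1)) := pq_succ _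
    have p2 : pq (k + 1) = pq k * (1 - Qv ^ (k + 1)) := pq_succ _
    have p3 : pq (c + 1) = pq c * (1 - Qv ^ (c + 1)) := pq_succ _
    rw [p1, p2, p3]
    have h1 := pq_ne_zero (k + 1 + c)
    have h2 := pq_ne_zero k
    have h3 := pq_ne_zero c
    have h4 := one_sub_Qv_ne_zero k
    have h5 := one_sub_Qv_ne_zero c
    field_simp
    ring

lemma vandermonde : ∀ (B t k : ℕ), k ≤ t →
    gb (t + B) k = ∑ j ∈ Finset.range (k + 1), Qv ^ (j * (t - k + j)) * gb t (k - j) * gb B j := by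
  intro B
  induction B with
  | zero =>
    intro t k hk
    rw [Finset.sum_eq_single 0]
    · simp [gb_zero_right]
    · intro j _ hj
      obtain ⟨i, rfl⟩ : ∃ i, j = i + 1 := ⟨j - 1, by omega⟩
      rw [@gb_eq_zero 0 (i + 1) (by omega)]
      ring
    · intro h; exact absurd (Finset.mem_range.mpr (by omega)) h
  | succ B IH =>
    intro t k hk
    rcases Nat.eq_zero_or_pos k with rfl | hkpos
    · rw [gb_zero_right]
      simp [gb_zero_right]
    obtain ⟨k', rfl⟩ : ∃ k', k = k' + 1 := ⟨k - 1, by omega⟩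
    have hstep : ∀ j ∈ Finset.range (k' + 2),
        Qv ^ (j * (t - (k' + 1) + j)) * gb t (k' + 1 - j) * gb (B + 1) j
        = Qv ^ (j * (t - (k' + 1) + j)) * gb t (k' + 1 - j) * gb B j
          + Qv ^ (j * (t - (k' + 1) + j)) * gb t (k' + 1 - j) *
              (Nat.casesOn j (0 : KK) (fun i => Qv ^ (B - i) * gb B i)) := by
      intro j _
      cases j with
      | zero => simp [gb_zero_right]
      | succ i =>
        rw [pascal2 B i]
        ring
    rw [Finset.sum_congr rfl hstep, Finset.sum_add_distrib]
    have hfirst : ∑ j ∈ Finset.range (k' + 2),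
        Qv ^ (j * (t - (k' + 1) + j)) * gb t (k' + 1 - j) * gb B j = gb (t + B) (k' + 1) :=
      (IH t (k' + 1) hk).symm
    have hsecond : ∑ j ∈ Finset.range (k' + 2),
        Qv ^ (j * (t - (k' + 1) + j)) * gb t (k' + 1 - j) *
          (Nat.casesOn j (0 : KK) (fun i => Qv ^ (B - i) * gb B i))
        = Qv ^ (t + B - k') * gb (t + B) k' := by
      rw [Finset.sum_range_succ']
      simp only [Nat.succ_sub_succ]
      have hterm : ∀ i ∈ Finset.range (k' + 1),
          Qv ^ ((i + 1) * (t - (k' + 1) + (i + 1))) * gb t (k' - i) *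
            (Qv ^ (B - i) * gb B i)
          = Qv ^ (t + B - k') * (Qv ^ (i * (t - k' + i)) * gb t (k' - i) * gb B i) := by
        intro i _
        rcases le_or_gt i B with hiB | hiB
        · obtain ⟨c, rfl⟩ : ∃ c, t = k' + 1 + c := ⟨t - (k' + 1), by omega⟩
          obtain ⟨b, rfl⟩ : ∃ b, B = i + b := ⟨B - i, by omega⟩
          have e1 : k' + 1 + c - (k' + 1) = c := by omega
          have e2 : i + b - i = b := by omega
          have e3 : k' + 1 + c + (i + b) - k' = 1 + c + i + b := by omega
          have e4 : k' + 1 + c - k' = c + 1 := by omega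
          rw [e1, e2, e3, e4]
          have hpow : Qv ^ ((i + 1) * (c + (i + 1))) * Qv ^ b
              = Qv ^ (1 + c + i + b) * Qv ^ (i * (c + 1 + i)) := by
            rw [← pow_add, ← pow_add]
            congr 1
            ring
          linear_combination (gb (k' + 1 + c) (k' - i) * gb (i + b) i) * hpow
        · rw [gb_eq_zero hiB]
          ring
      rw [Finset.sum_congr rfl hterm, ← Finset.mul_sum, ← IH t k' (by omega)]
      simp
    rw [hfirst, hsecond]
    have : t + (B + 1) = (t + B) + 1 := by omega
    rw [this]
    exact pascal2 (t + B) k'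

lemma durfee : ∀ (N a : ℕ),
    ∑ u ∈ Finset.range (N + 1), Qv ^ (u * (u + a)) * gb N u * (pq (u + a))⁻¹
      = (pq (N + a))⁻¹ := by
  intro N
  induction N with
  | zero =>
    intro a
    simp [gb_zero_right]
  | succ N IH =>
    intro a
    have hstep : ∀ u ∈ Finset.range (N + 2),
        Qv ^ (u * (u + a)) * gb (N + 1) u * (pq (u + a))⁻¹
        = Qv ^ (u * (u + a) + u) * gb N u * (pq (u + a))⁻¹
          + Qv ^ (u * (u + a)) * (Nat.casesOn u (0 : KK) (fun v => gb N v)) * (pq (u + a))⁻¹ := by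
      intro u _
      cases u with
      | zero => simp [gb_zero_right]
      | succ v =>
        rw [pascal1 N v, pow_add]
        ring
    rw [Finset.sum_congr rfl hstep, Finset.sum_add_distrib]
    have hA : ∑ u ∈ Finset.range (N + 2), Qv ^ (u * (u + a) + u) * gb N u * (pq (u + a))⁻¹
        = ∑ u ∈ Finset.range (N + 1),
            (Qv ^ (u * (u + (a + 1))) * gb N u * (pq (u + (a + 1)))⁻¹
              - Qv ^ ((u + 1) * (u + (a + 1))) * gb N u * (pq (u + (a + 1)))⁻¹) := by
      rw [Finset.sum_range_succ, @gb_eq_zero N (N + 1) (by omega), mul_zero, zero_mul, add_zero]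
      apply Finset.sum_congr rfl
      intro u _
      have e0 : u + (a + 1) = u + a + 1 := by omega
      rw [e0]
      have hp : (pq (u + a))⁻¹ = (1 - Qv ^ (u + a + 1)) * (pq (u + a + 1))⁻¹ := by
        have h2 := one_sub_Qv_ne_zero (u + a)
        rw [pq_succ (u + a), mul_inv, ← mul_assoc, mul_comm (1 - Qv ^ (u + a + 1)) (pq (u + a))⁻¹,
          mul_assoc, mul_inv_cancel₀ h2, mul_one]
      rw [hp]
      have p1 : Qv ^ (u * (u + a + 1)) = Qv ^ (u * (u + a) + u) := by
        rw [show u * (u + a + 1) = u * (u + a) + u from by ring]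
      have p2 : Qv ^ ((u + 1) * (u + a + 1)) = Qv ^ (u * (u + a) + u) * Qv ^ (u + a + 1) := by
        rw [← pow_add, show (u + 1) * (u + a + 1) = u * (u + a) + u + (u + a + 1) from by ring]
      rw [p1, p2]
      ring
    have hB : ∑ u ∈ Finset.range (N + 2),
        Qv ^ (u * (u + a)) * (Nat.casesOn u (0 : KK) (fun v => gb N v)) * (pq (u + a))⁻¹
        = ∑ u ∈ Finset.range (N + 1),
            Qv ^ ((u + 1) * (u + (a + 1))) * gb N u * (pq (u + (a + 1)))⁻¹ := by
      rw [Finset.sum_range_succ']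
      have : ∀ v ∈ Finset.range (N + 1),
          Qv ^ ((v + 1) * (v + 1 + a)) * (Nat.casesOn (v + 1) (0 : KK) (fun v => gb N v))
            * (pq (v + 1 + a))⁻¹
          = Qv ^ ((v + 1) * (v + (a + 1))) * gb N v * (pq (v + (a + 1)))⁻¹ := by
        intro v _
        have e0 : v + 1 + a = v + (a + 1) := by omega
        rw [e0]
      rw [Finset.sum_congr rfl this]
      simp
    rw [hA, hB, Finset.sum_sub_distrib, sub_add_cancel, IH (a + 1),
      show N + (a + 1) = N + 1 + a from by omega]

lemma vandermonde_symm (t B : ℕ) :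
    gb (t + B) t = ∑ s ∈ Finset.range (t + 1), Qv ^ (s * s) * gb t s * gb B s := by
  rw [vandermonde B t t le_rfl]
  apply Finset.sum_congr rfl
  intro j hj
  have hj' := Finset.mem_range.mp hj
  rw [Nat.sub_self, Nat.zero_add, gb_symm (by omega : j ≤ t)]

def de (L : ℕ) (d : Fin L → ℕ) (j : ℕ) : ℕ := if h : j < L then d ⟨j, h⟩ else 0

noncomputable def wtop (L : ℕ) (d : Fin L → ℕ) : KK :=
  Qv ^ (∑ j ∈ Finset.range L, (de L d j) ^ 2) *
    ∏ j ∈ Finset.range L, (pq (de L d j - de L d (j + 1)))⁻¹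

noncomputable def wt (L t : ℕ) (d : Fin L → ℕ) : KK :=
  (pq (t - de L d 0))⁻¹ * wtop L d

def AA (L t B : ℕ) : Finset (Fin L → ℕ) :=
  (Fintype.piFinset fun _ : Fin L => Finset.range (t + 1)).filter
    fun d => (∀ a b : Fin L, a ≤ b → d b ≤ d a) ∧ (∑ i, d i) ≤ B

lemma de_cons (L s : ℕ) (d' : Fin L → ℕ) (j : ℕ) :
    de (L + 1) (Fin.cons s d') (j + 1) = de L d' j := by
  unfold de
  rcases Nat.lt_or_ge j L with h | h
  · rw [dif_pos (by omega : j + 1 < L + 1), dif_pos h]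
    exact Fin.cons_succ (α := fun _ => ℕ) s d' ⟨j, h⟩
  · rw [dif_neg (by omega), dif_neg (by omega)]

lemma de_cons_zero (L s : ℕ) (d' : Fin L → ℕ) :
    de (L + 1) (Fin.cons s d') 0 = s := by
  unfold de
  rw [dif_pos (by omega : 0 < L + 1)]
  exact Fin.cons_zero (α := fun _ => ℕ) s d'

lemma wtop_cons (L s : ℕ) (d' : Fin L → ℕ) :
    wtop (L + 1) (Fin.cons s d') = Qv ^ (s ^ 2) * wt L s d' := by
  unfold wtop wt wtop
  rw [Finset.sum_range_succ', Finset.prod_range_succ']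
  have h0 := de_cons_zero L s d'
  have hs : ∀ j, de (L + 1) (Fin.cons s d') (j + 1) = de L d' j := de_cons L s d'
  rw [h0]
  rw [Finset.sum_congr rfl (fun j _ => by rw [hs j])]
  rw [Finset.prod_congr rfl (fun j _ => by rw [hs j, hs (j + 1)])]
  rw [hs 0]
  rw [pow_add]
  ring

lemma wt_cons (L t s : ℕ) (d' : Fin L → ℕ) :
    wt (L + 1) t (Fin.cons s d') = Qv ^ (s ^ 2) * (pq (t - s))⁻¹ * wt L s d' := by
  unfold wt
  rw [de_cons_zero]
  have := wtop_cons L s d'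
  unfold wt at this
  rw [this]
  ring

lemma wt_nil (t : ℕ) (d : Fin 0 → ℕ) : wt 0 t d = (pq t)⁻¹ := by
  unfold wt wtop de
  simp

lemma main_lem : ∀ (L t B : ℕ), (B ≤ L ∨ t = 0) →
    ∑ d ∈ AA L t B, wt L t d = gb (t + B) t * (pq t)⁻¹ := by
  intro L
  induction L with
  | zero =>
    intro t B hside
    have h1 : ∑ d ∈ AA 0 t B, wt 0 t d = (pq t)⁻¹ := by
      rw [Finset.sum_eq_single_of_mem (default : Fin 0 → ℕ)]
      · exact wt_nil t _
      · rw [AA, Finset.mem_filter]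
        refine ⟨?_, fun a b _ => a.elim0, by simp⟩
        rw [Fintype.mem_piFinset]
        exact fun i => i.elim0
      · intro b _ hb
        exact absurd (Subsingleton.elim b default) hb
    rw [h1]
    rcases hside with hB | ht
    · have : B = 0 := by omega
      subst this
      rw [Nat.add_zero, gb_diag, one_mul]
    · subst ht
      rw [Nat.zero_add, gb_zero_right, one_mul]
  | succ L IH =>
    intro t B hside
    rcases Nat.eq_zero_or_pos t with rfl | htpos
    · -- t = 0 : only the zero tuple
      have hz : ∀ j, de (L + 1) (fun _ : Fin (L + 1) => (0 : ℕ)) j = 0 := by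
        intro j
        unfold de
        split <;> rfl
      have h1 : ∑ d ∈ AA (L + 1) 0 B, wt (L + 1) 0 d = 1 := by
        rw [Finset.sum_eq_single_of_mem (fun _ : Fin (L + 1) => (0 : ℕ))]
        · unfold wt wtop
          simp [hz, pq_zero]
        · rw [AA, Finset.mem_filter]
          refine ⟨?_, fun a b _ => le_rfl, by simp⟩
          rw [Fintype.mem_piFinset]
          intro i
          simp
        · intro b hb hne
          exfalso
          apply hne
          funext i
          rw [AA, Finset.mem_filter] at hb
          have := Fintype.mem_piFinset.mp hb.1 i
          rw [Finset.mem_range] at this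
          omega
      rw [h1, Nat.zero_add, gb_zero_right, pq_zero]
      simp
    · -- t ≥ 1, so B ≤ L + 1
      have hBL : B ≤ L + 1 := by
        rcases hside with h | h
        · exact h
        · omega
      have hmaps : ∀ d ∈ AA (L + 1) t B, d 0 ∈ Finset.range (t + 1) := by
        intro d hd
        rw [AA, Finset.mem_filter] at hd
        exact Fintype.mem_piFinset.mp hd.1 0
      rw [← Finset.sum_fiberwise_of_maps_to hmaps (wt (L + 1) t)]
      have hinner : ∀ s ∈ Finset.range (t + 1),
          (∑ d ∈ (AA (L + 1) t B).filter (fun d => d 0 = s), wt (L + 1) t d)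
          = Qv ^ (s * s) * gb t s * gb B s * (pq t)⁻¹ := by
        intro s hs
        have hst : s ≤ t := by
          have := Finset.mem_range.mp hs
          omega
        have hgbts : gb t s = pq t / (pq s * pq (t - s)) := by
          unfold gb
          rw [if_pos hst]
        rcases le_or_gt s B with hsB | hsB
        · -- fiber ≅ AA L s (B - s)
          have hbij : ∑ d ∈ (AA (L + 1) t B).filter (fun d => d 0 = s), wt (L + 1) t d
              = ∑ d' ∈ AA L s (B - s), Qv ^ (s ^ 2) * (pq (t - s))⁻¹ * wt L s d' := by
            refine Finset.sum_nbij' (fun d => Fin.tail d) (fun d' => Fin.cons s d')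
              ?_ ?_ ?_ ?_ ?_
            · intro d hd
              rw [Finset.mem_filter] at hd
              obtain ⟨hdA, hd0⟩ := hd
              rw [AA, Finset.mem_filter] at hdA
              obtain ⟨hpi, hanti, hsum⟩ := hdA
              rw [AA, Finset.mem_filter]
              refine ⟨?_, ?_, ?_⟩
              · rw [Fintype.mem_piFinset]
                intro i
                rw [Finset.mem_range]
                have := hanti 0 i.succ (Fin.zero_le _)
                rw [hd0] at this
                exact Nat.lt_succ_of_le this
              · intro a b hab
                exact hanti a.succ b.succ (Fin.succ_le_succ_iff.mpr hab)
              · have hsplit : ∑ i : Fin (L + 1), d i = d 0 + ∑ i : Fin L, d i.succ :=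
                  Fin.sum_univ_succ d
                have : ∑ i : Fin L, Fin.tail d i = ∑ i : Fin L, d i.succ := rfl
                rw [this]
                omega
            · intro d' hd'
              rw [AA, Finset.mem_filter] at hd'
              obtain ⟨hpi, hanti, hsum⟩ := hd'
              rw [Finset.mem_filter, AA, Finset.mem_filter]
              have hpi' : ∀ i : Fin L, d' i ≤ s := by
                intro i
                have := Fintype.mem_piFinset.mp hpi i
                rw [Finset.mem_range] at this
                omega
              refine ⟨⟨?_, ?_, ?_⟩, Fin.cons_zero (α := fun _ => ℕ) s d'⟩
              · rw [Fintype.mem_piFinset]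
                intro i
                rw [Finset.mem_range]
                refine Fin.cases ?_ ?_ i
                · simp only [Fin.cons_zero]
                  omega
                · intro j
                  simp only [Fin.cons_succ]
                  have := hpi' j
                  omega
              · intro a b hab
                rcases Fin.eq_zero_or_eq_succ a with rfl | ⟨i, rfl⟩
                · rcases Fin.eq_zero_or_eq_succ b with rfl | ⟨j, rfl⟩
                  · exact le_rfl
                  · simp only [Fin.cons_succ, Fin.cons_zero]
                    exact hpi' j
                · rcases Fin.eq_zero_or_eq_succ b with rfl | ⟨j, rfl⟩
                  · exact absurd hab (not_le.mpr (Fin.succ_pos i))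
                  · simp only [Fin.cons_succ]
                    exact hanti i j (Fin.succ_le_succ_iff.mp hab)
              · simp only [Fin.sum_univ_succ, Fin.cons_zero, Fin.cons_succ]
                omega
            · intro d hd
              rw [Finset.mem_filter] at hd
              rw [← hd.2]
              exact Fin.cons_self_tail d
            · intro d' _
              exact Fin.tail_cons (α := fun _ => ℕ) s d'
            · intro d hd
              rw [Finset.mem_filter] at hd
              conv_lhs => rw [← Fin.cons_self_tail d]
              rw [hd.2]
              exact wt_cons L t s (Fin.tail d)
          rw [hbij, ← Finset.mul_sum, IH s (B - s) (by omega),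
            show s + (B - s) = B from by omega]
          rw [hgbts, show s ^ 2 = s * s from pow_two s]
          have h1 := pq_ne_zero t
          have h2 := pq_ne_zero s
          have h3 := pq_ne_zero (t - s)
          field_simp
        · -- fiber empty
          have hempty : (AA (L + 1) t B).filter (fun d => d 0 = s) = ∅ := by
            rw [Finset.filter_eq_empty_iff]
            intro d hd
            rw [AA, Finset.mem_filter] at hd
            obtain ⟨_, _, hsum⟩ := hd
            have hle : d 0 ≤ ∑ i, d i :=
              Finset.single_le_sum (fun i _ => Nat.zero_le (d i)) (Finset.mem_univ 0)
            intro h0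
            omega
          rw [hempty, Finset.sum_empty, gb_eq_zero hsB]
          ring
      rw [Finset.sum_congr rfl hinner, ← Finset.sum_mul, ← vandermonde_symm t B]

lemma ii_qPoch_inv (k : ℕ) : ii (qPoch k)⁻¹ = (pq k)⁻¹ := by
  apply ii_inv
  rw [qPoch_constCoeff]
  exact one_ne_zero

/-- `Σ_{m=0}^{r−1} X_m = 1/(q)_{r−1}`. -/
theorem sum_X_lt (r : ℕ) (hr : 2 ≤ r) :
    ∑ m ∈ Finset.range r, Xm r m = (qPoch (r - 1))⁻¹ := by
  obtain ⟨M, rfl⟩ : ∃ M, r = M + 2 := ⟨r - 2, by omega⟩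
  apply ii_inj
  have hRHS : ii (qPoch (M + 2 - 1))⁻¹ = (pq (M + 1))⁻¹ := ii_qPoch_inv (M + 1)
  rw [hRHS, map_sum]
  -- rewrite each Xm under ii as a sum of wtop
  have hXm : ∀ m, ii (Xm (M + 2) m)
      = ∑ d ∈ (Finset.Nat.antidiagonalTuple (M + 1) m).filter
          (fun d => ∀ a b : Fin (M + 1), a ≤ b → d b ≤ d a), wtop (M + 1) d := by
    intro m
    rw [Xm, map_sum]
    apply Finset.sum_congr rfl
    intro d _
    rw [map_mul, map_pow, map_prod, wtop]
    have hde : dext (M + 2) d = de (M + 1) d := rfl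
    rw [hde]
    congr 1
    apply Finset.prod_congr rfl
    intro j _
    exact ii_qPoch_inv _
  rw [Finset.sum_congr rfl (fun m _ => hXm m)]
  -- combine the double sum into a single sum over AA (M+1) (M+1) (M+1)
  have hmaps : ∀ d ∈ AA (M + 1) (M + 1) (M + 1), (∑ i, d i) ∈ Finset.range (M + 2) := by
    intro d hd
    rw [AA, Finset.mem_filter] at hd
    rw [Finset.mem_range]
    omega
  have hcomb : ∑ m ∈ Finset.range (M + 2),
      ∑ d ∈ (Finset.Nat.antidiagonalTuple (M + 1) m).filter
          (fun d => ∀ a b : Fin (M + 1), a ≤ b → d b ≤ d a), wtop (M + 1) d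
      = ∑ d ∈ AA (M + 1) (M + 1) (M + 1), wtop (M + 1) d := by
    rw [← Finset.sum_fiberwise_of_maps_to hmaps (wtop (M + 1))]
    apply Finset.sum_congr rfl
    intro m hm
    have hm' := Finset.mem_range.mp hm
    have hsets : (AA (M + 1) (M + 1) (M + 1)).filter (fun d => ∑ i, d i = m)
        = (Finset.Nat.antidiagonalTuple (M + 1) m).filter
            (fun d => ∀ a b : Fin (M + 1), a ≤ b → d b ≤ d a) := by
      ext d
      rw [Finset.mem_filter, Finset.mem_filter, AA, Finset.mem_filter,
        Finset.Nat.mem_antidiagonalTuple]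
      constructor
      · rintro ⟨⟨hpi, hanti, hle⟩, hsum⟩
        exact ⟨hsum, hanti⟩
      · rintro ⟨hsum, hanti⟩
        have hbox : ∀ i : Fin (M + 1), d i ∈ Finset.range (M + 1 + 1) := by
          intro i
          rw [Finset.mem_range]
          have : d i ≤ ∑ j, d j :=
            Finset.single_le_sum (fun j _ => Nat.zero_le (d j)) (Finset.mem_univ i)
          omega
        exact ⟨⟨Fintype.mem_piFinset.mpr hbox, hanti, by omega⟩, hsum⟩
    rw [hsets]
  rw [hcomb]
  -- split off the first coordinate
  have hmaps0 : ∀ d ∈ AA (M + 1) (M + 1) (M + 1), d 0 ∈ Finset.range (M + 2) := by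
    intro d hd
    rw [AA, Finset.mem_filter] at hd
    exact Fintype.mem_piFinset.mp hd.1 0
  rw [← Finset.sum_fiberwise_of_maps_to hmaps0 (wtop (M + 1))]
  have hinner : ∀ s ∈ Finset.range (M + 2),
      (∑ d ∈ (AA (M + 1) (M + 1) (M + 1)).filter (fun d => d 0 = s), wtop (M + 1) d)
      = Qv ^ (s * (s + 0)) * gb (M + 1) s * (pq (s + 0))⁻¹ := by
    intro s hs
    have hst : s ≤ M + 1 := by
      have := Finset.mem_range.mp hs
      omega
    have hbij : ∑ d ∈ (AA (M + 1) (M + 1) (M + 1)).filter (fun d => d 0 = s), wtop (M + 1) d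
        = ∑ d' ∈ AA M s (M + 1 - s), Qv ^ (s ^ 2) * wt M s d' := by
      refine Finset.sum_nbij' (fun d => Fin.tail d) (fun d' => Fin.cons s d') ?_ ?_ ?_ ?_ ?_
      · intro d hd
        rw [Finset.mem_filter] at hd
        obtain ⟨hdA, hd0⟩ := hd
        rw [AA, Finset.mem_filter] at hdA
        obtain ⟨hpi, hanti, hsum⟩ := hdA
        rw [AA, Finset.mem_filter]
        refine ⟨?_, ?_, ?_⟩
        · rw [Fintype.mem_piFinset]
          intro i
          rw [Finset.mem_range]
          have := hanti 0 i.succ (Fin.zero_le _)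
          rw [hd0] at this
          exact Nat.lt_succ_of_le this
        · intro a b hab
          exact hanti a.succ b.succ (Fin.succ_le_succ_iff.mpr hab)
        · have hsplit : ∑ i : Fin (M + 1), d i = d 0 + ∑ i : Fin M, d i.succ :=
            Fin.sum_univ_succ d
          have h2 : ∑ i : Fin M, Fin.tail d i = ∑ i : Fin M, d i.succ := rfl
          rw [h2]
          omega
      · intro d' hd'
        rw [AA, Finset.mem_filter] at hd'
        obtain ⟨hpi, hanti, hsum⟩ := hd'
        rw [Finset.mem_filter, AA, Finset.mem_filter]
        have hpi' : ∀ i : Fin M, d' i ≤ s := by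
          intro i
          have := Fintype.mem_piFinset.mp hpi i
          rw [Finset.mem_range] at this
          omega
        refine ⟨⟨?_, ?_, ?_⟩, Fin.cons_zero (α := fun _ => ℕ) s d'⟩
        · rw [Fintype.mem_piFinset]
          intro i
          rw [Finset.mem_range]
          refine Fin.cases ?_ ?_ i
          · simp only [Fin.cons_zero]
            omega
          · intro j
            simp only [Fin.cons_succ]
            have := hpi' j
            omega
        · intro a b hab
          rcases Fin.eq_zero_or_eq_succ a with rfl | ⟨i, rfl⟩
          · rcases Fin.eq_zero_or_eq_succ b with rfl | ⟨j, rfl⟩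
            · exact le_rfl
            · simp only [Fin.cons_succ, Fin.cons_zero]
              exact hpi' j
          · rcases Fin.eq_zero_or_eq_succ b with rfl | ⟨j, rfl⟩
            · exact absurd hab (not_le.mpr (Fin.succ_pos i))
            · simp only [Fin.cons_succ]
              exact hanti i j (Fin.succ_le_succ_iff.mp hab)
        · simp only [Fin.sum_univ_succ, Fin.cons_zero, Fin.cons_succ]
          omega
      · intro d hd
        rw [Finset.mem_filter] at hd
        rw [← hd.2]
        exact Fin.cons_self_tail d
      · intro d' _
        exact Fin.tail_cons (α := fun _ => ℕ) s d'
      · intro d hd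
        rw [Finset.mem_filter] at hd
        conv_lhs => rw [← Fin.cons_self_tail d]
        rw [hd.2]
        exact wtop_cons M s (Fin.tail d)
    rw [hbij, ← Finset.mul_sum,
      main_lem M s (M + 1 - s)
        (by rcases Nat.eq_zero_or_pos s with rfl | h
            · exact Or.inr rfl
            · exact Or.inl (by omega)),
      show s + (M + 1 - s) = M + 1 from by omega,
      show s ^ 2 = s * (s + 0) from by ring, show s + 0 = s from by omega]
    ring
  rw [Finset.sum_congr rfl hinner]
  exact durfee (M + 1) 0
end

section
/- For every integer r ≥ 2, the generating series S_3 of the 3-colored partitions of type 3 satisfies S_3 = 1 − 2H + H² (q)_{r−1}/(q)_1. -/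
open PowerSeries Finset

/-- `H`, the generating series of the partition function. -/
noncomputable def Hq : PowerSeries ℚ :=
  PowerSeries.mk fun n => (Set.ncard {l : List ℕ | IsPtn l ∧ l.sum = n} : ℚ)

/-- generating series counting 3-colored partitions (triples of partitions) satisfying `P`,
by total size. -/
noncomputable def cseries (P : List ℕ → List ℕ → List ℕ → Prop) : PowerSeries ℚ :=
  PowerSeries.mk fun n =>
    (Set.ncard {t : List ℕ × List ℕ × List ℕ |
        P t.1 t.2.1 t.2.2 ∧ t.1.sum + t.2.1.sum + t.2.2.sum = n} : ℚ)

/-- type 3.a: black and red parts non-empty, no green parts, `1 ≤ ℓ_r ≤ k−1`. -/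
def Type3a (b rd g : List ℕ) : Prop :=
  IsPtn b ∧ IsPtn rd ∧ IsPtn g ∧ b ≠ [] ∧ rd ≠ [] ∧ g = [] ∧
    1 ≤ rd.length ∧ rd.length ≤ Kpart b - 1

/-- type 3.b: black and red parts non-empty, no green parts, `ℓ_r ≥ k` and `k + i_k ≥ r`. -/
def Type3b (r : ℕ) (b rd g : List ℕ) : Prop :=
  IsPtn b ∧ IsPtn rd ∧ IsPtn g ∧ b ≠ [] ∧ rd ≠ [] ∧ g = [] ∧
    Kpart b ≤ rd.length ∧ r ≤ Kpart b + Ikpart rd (Kpart b)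

def PtnSet (Q : Multiset ℕ → Prop) (n : ℕ) : Set (Multiset ℕ) :=
  {M | (∀ x ∈ M, 0 < x) ∧ Q M ∧ M.sum = n}

noncomputable def SQ (Q : Multiset ℕ → Prop) : PowerSeries ℚ :=
  PowerSeries.mk fun n => ((PtnSet Q n).ncard : ℚ)

lemma ptnSet_finite (Q : Multiset ℕ → Prop) (n : ℕ) : (PtnSet Q n).Finite := by
  have h : PtnSet Q n ⊆ (fun p : Nat.Partition n => p.parts) '' Set.univ := by
    rintro M ⟨h1, _, h3⟩
    exact ⟨⟨M, fun hi => h1 _ hi, h3⟩, trivial, rfl⟩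
  exact Set.Finite.subset (Set.toFinite _) h

lemma ptnSet_congr {Q Q' : Multiset ℕ → Prop}
    (h : ∀ M : Multiset ℕ, (∀ x ∈ M, 0 < x) → (Q M ↔ Q' M)) (n : ℕ) :
    PtnSet Q n = PtnSet Q' n := by
  ext M; unfold PtnSet
  simp only [Set.mem_setOf_eq]
  exact ⟨fun ⟨a, b, c⟩ => ⟨a, (h M a).1 b, c⟩, fun ⟨a, b, c⟩ => ⟨a, (h M a).2 b, c⟩⟩

lemma SQ_congr {Q Q' : Multiset ℕ → Prop}
    (h : ∀ M : Multiset ℕ, (∀ x ∈ M, 0 < x) → (Q M ↔ Q' M)) : SQ Q = SQ Q' := by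
  unfold SQ
  exact congrArg PowerSeries.mk (funext fun n => by rw [ptnSet_congr h n])

lemma sorted_rev_of_sort (M : Multiset ℕ) :
    (Multiset.sort M (· ≤ ·)).reverse.Pairwise (· ≥ ·) := by
  have := Multiset.pairwise_sort M (· ≤ ·)
  exact List.pairwise_reverse.2 this

lemma ncard_list_eq (Q : Multiset ℕ → Prop) (P : List ℕ → Prop)
    (hPQ : ∀ l : List ℕ, IsPtn l → (P l ↔ Q ↑l)) (n : ℕ) :
    Set.ncard {l : List ℕ | IsPtn l ∧ P l ∧ l.sum = n} = (PtnSet Q n).ncard := by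
  have himg : (fun l : List ℕ => (↑l : Multiset ℕ)) '' {l : List ℕ | IsPtn l ∧ P l ∧ l.sum = n}
      = PtnSet Q n := by
    ext M
    constructor
    · rintro ⟨l, ⟨hl, hP, hsum⟩, rfl⟩
      exact ⟨fun x hx => hl.2 x hx, (hPQ l hl).1 hP, hsum⟩
    · rintro ⟨h1, h2, h3⟩
      have hcoe : (((Multiset.sort M (· ≤ ·)).reverse : List ℕ) : Multiset ℕ) = M := by
        have : ((Multiset.sort M (· ≤ ·)).reverse : List ℕ).Perm (Multiset.sort M (· ≤ ·)) :=
          List.reverse_perm _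
        rw [Multiset.coe_eq_coe.2 this, Multiset.sort_eq]
      have hptn : IsPtn (Multiset.sort M (· ≤ ·)).reverse := by
        refine ⟨sorted_rev_of_sort M, fun x hx => h1 x ?_⟩
        rw [← hcoe]; exact hx
      refine ⟨(Multiset.sort M (· ≤ ·)).reverse, ⟨hptn, ?_, ?_⟩, hcoe⟩
      · rw [hPQ _ hptn, hcoe]; exact h2
      · have h4 := congrArg Multiset.sum hcoe
        rw [Multiset.sum_coe] at h4
        exact h4.trans h3
  have hinj : Set.InjOn (fun l : List ℕ => (↑l : Multiset ℕ))
      {l : List ℕ | IsPtn l ∧ P l ∧ l.sum = n} := by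
    intro l1 h1 l2 h2 h
    exact List.Perm.eq_of_pairwise' h1.1.1 h2.1.1 (Quotient.exact h)
  rw [← himg, Set.ncard_image_of_injOn hinj]

lemma ptnSet_def (Q : Multiset ℕ → Prop) (n : ℕ) :
    PtnSet Q n = {M | (∀ x ∈ M, 0 < x) ∧ Q M ∧ M.sum = n} := rfl
def PairSet (Q₁ Q₂ : Multiset ℕ → Prop) (n : ℕ) : Set (Multiset ℕ × Multiset ℕ) :=
  {z | (∀ x ∈ z.1, 0 < x) ∧ (∀ x ∈ z.2, 0 < x) ∧ Q₁ z.1 ∧ Q₂ z.2 ∧ z.1.sum + z.2.sum = n}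

lemma pair_core (Q₁ Q₂ : Multiset ℕ → Prop) (n : ℕ) :
    (PairSet Q₁ Q₂ n).Finite ∧ (PairSet Q₁ Q₂ n).ncard
      = ∑ ab ∈ antidiagonal n, (PtnSet Q₁ ab.1).ncard * (PtnSet Q₂ ab.2).ncard := by
  classical
  have hFA : ∀ a, ((ptnSet_finite Q₁ a).toFinset : Set (Multiset ℕ)) = PtnSet Q₁ a :=
    fun a => (ptnSet_finite Q₁ a).coe_toFinset
  set F : Finset (Multiset ℕ × Multiset ℕ) :=
    (antidiagonal n).biUnion
      (fun ab => (ptnSet_finite Q₁ ab.1).toFinset ×ˢ (ptnSet_finite Q₂ ab.2).toFinset) with hF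
  have hcoe : (F : Set (Multiset ℕ × Multiset ℕ)) = PairSet Q₁ Q₂ n := by
    ext z
    simp only [hF, coe_biUnion, Set.mem_iUnion, Finset.mem_coe, Finset.mem_product,
      Set.Finite.mem_toFinset, Finset.mem_antidiagonal, PairSet, Set.mem_setOf_eq, ptnSet_def]
    constructor
    · rintro ⟨⟨a, b⟩, hab, ⟨h1, h2, h3⟩, ⟨h4, h5, h6⟩⟩
      exact ⟨h1, h4, h2, h5, by rw [h3, h6]; exact mem_antidiagonal.1 hab⟩
    · rintro ⟨h1, h2, h3, h4, h5⟩
      exact ⟨(z.1.sum, z.2.sum), mem_antidiagonal.2 h5, ⟨h1, h3, rfl⟩, ⟨h2, h4, rfl⟩⟩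
  have hdisj : ∀ ab ∈ antidiagonal n, ∀ cd ∈ antidiagonal n, ab ≠ cd →
      Disjoint ((ptnSet_finite Q₁ ab.1).toFinset ×ˢ (ptnSet_finite Q₂ ab.2).toFinset)
        ((ptnSet_finite Q₁ cd.1).toFinset ×ˢ (ptnSet_finite Q₂ cd.2).toFinset) := by
    intro ab _ cd _ hne
    rw [Finset.disjoint_left]
    rintro z hz hz'
    simp only [Finset.mem_product, Set.Finite.mem_toFinset, ptnSet_def, Set.mem_setOf_eq] at hz hz'
    apply hne
    have := hz.1.2.2; have := hz'.1.2.2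
    exact Prod.ext (hz.1.2.2 ▸ hz'.1.2.2.symm ▸ rfl) (hz.2.2.2 ▸ hz'.2.2.2.symm ▸ rfl)
  refine ⟨by rw [← hcoe]; exact F.finite_toSet, ?_⟩
  calc (PairSet Q₁ Q₂ n).ncard = F.card := by rw [← hcoe, Set.ncard_coe_finset]
    _ = ∑ ab ∈ antidiagonal n,
        ((ptnSet_finite Q₁ ab.1).toFinset ×ˢ (ptnSet_finite Q₂ ab.2).toFinset).card :=
      Finset.card_biUnion hdisj
    _ = _ := by
      refine Finset.sum_congr rfl fun ab _ => ?_
      rw [Finset.card_product, ← Set.ncard_coe_finset, ← Set.ncard_coe_finset,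
        (ptnSet_finite Q₁ ab.1).coe_toFinset, (ptnSet_finite Q₂ ab.2).coe_toFinset]

lemma pairSet_finite (Q₁ Q₂ : Multiset ℕ → Prop) (n : ℕ) : (PairSet Q₁ Q₂ n).Finite :=
  (pair_core Q₁ Q₂ n).1

lemma pair_ncard (Q₁ Q₂ : Multiset ℕ → Prop) (n : ℕ) :
    (PairSet Q₁ Q₂ n).ncard
      = ∑ ab ∈ antidiagonal n, (PtnSet Q₁ ab.1).ncard * (PtnSet Q₂ ab.2).ncard :=
  (pair_core Q₁ Q₂ n).2
lemma coeff_SQ_mul (Q₁ Q₂ : Multiset ℕ → Prop) (n : ℕ) :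
    (coeff n) (SQ Q₁ * SQ Q₂) = ((PairSet Q₁ Q₂ n).ncard : ℚ) := by
  rw [coeff_mul, pair_ncard]
  push_cast
  simp [SQ, coeff_mk]

lemma SQ_split (t : ℕ) (Q₁ Q₂ : Multiset ℕ → Prop) :
    SQ (fun M => Q₁ (M.filter (fun x => t < x)) ∧ Q₂ (M.filter (fun x => x ≤ t)))
      = SQ (fun M => (∀ x ∈ M, t < x) ∧ Q₁ M) * SQ (fun M => (∀ x ∈ M, x ≤ t) ∧ Q₂ M) := by
  ext n
  rw [coeff_SQ_mul, SQ, coeff_mk]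
  congr 1
  have himg : (fun z : Multiset ℕ × Multiset ℕ => z.1 + z.2) ''
      PairSet (fun M => (∀ x ∈ M, t < x) ∧ Q₁ M) (fun M => (∀ x ∈ M, x ≤ t) ∧ Q₂ M) n
      = PtnSet (fun M => Q₁ (M.filter (fun x => t < x)) ∧ Q₂ (M.filter (fun x => x ≤ t))) n := by
    rw [ptnSet_def]
    ext M
    constructor
    · rintro ⟨⟨M₁, M₂⟩, ⟨hp1, hp2, ⟨hgt, hQ1⟩, ⟨hle, hQ2⟩, hsum⟩, rfl⟩
      have hf1 : (M₁ + M₂).filter (fun x => t < x) = M₁ := by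
        rw [Multiset.filter_add, Multiset.filter_eq_self.2 hgt,
          Multiset.filter_eq_nil.2 (fun a ha => not_lt.2 (hle a ha)), add_zero]
      have hf2 : (M₁ + M₂).filter (fun x => x ≤ t) = M₂ := by
        rw [Multiset.filter_add, Multiset.filter_eq_nil.2 (fun a ha => not_le.2 (hgt a ha)),
          Multiset.filter_eq_self.2 hle, zero_add]
      refine ⟨?_, ⟨by rw [hf1]; exact hQ1, by rw [hf2]; exact hQ2⟩, by simpa using hsum⟩
      intro x hx
      rcases Multiset.mem_add.1 hx with h | h
      · exact hp1 x h
      · exact hp2 x h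
    · rintro ⟨hpos, ⟨hQ1, hQ2⟩, hsum⟩
      refine ⟨(M.filter (fun x => t < x), M.filter (fun x => x ≤ t)),
        ⟨fun x hx => hpos x (Multiset.mem_of_mem_filter hx),
         fun x hx => hpos x (Multiset.mem_of_mem_filter hx),
         ⟨fun x hx => (Multiset.mem_filter.1 hx).2, hQ1⟩,
         ⟨fun x hx => (Multiset.mem_filter.1 hx).2, hQ2⟩, ?_⟩, ?_⟩
      · have hM : M.filter (fun x => t < x) + M.filter (fun x => x ≤ t) = M := by
          have := Multiset.filter_add_not (fun x => t < x) M
          simpa [not_lt] using this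
        calc (M.filter (fun x => t < x)).sum + (M.filter (fun x => x ≤ t)).sum
            = (M.filter (fun x => t < x) + M.filter (fun x => x ≤ t)).sum :=
              (Multiset.sum_add _ _).symm
          _ = n := by rw [hM, hsum]
      · have : M.filter (fun x => t < x) + M.filter (fun x => x ≤ t) = M := by
          have := Multiset.filter_add_not (fun x => t < x) M
          simpa [not_lt] using this
        simpa using this
  have hinj : Set.InjOn (fun z : Multiset ℕ × Multiset ℕ => z.1 + z.2)
      (PairSet (fun M => (∀ x ∈ M, t < x) ∧ Q₁ M) (fun M => (∀ x ∈ M, x ≤ t) ∧ Q₂ M) n) := by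
    rintro ⟨M₁, M₂⟩ ⟨hp1, hp2, ⟨hgt, _⟩, ⟨hle, _⟩, _⟩ ⟨N₁, N₂⟩ ⟨hq1, hq2, ⟨hgt', _⟩, ⟨hle', _⟩, _⟩ h
    simp only at h
    have hf : ∀ (A B : Multiset ℕ), (∀ x ∈ A, t < x) → (∀ x ∈ B, x ≤ t) →
        (A + B).filter (fun x => t < x) = A := by
      intro A B hA hB
      rw [Multiset.filter_add, Multiset.filter_eq_self.2 hA,
        Multiset.filter_eq_nil.2 (fun a ha => not_lt.2 (hB a ha)), add_zero]
    have h1 : M₁ = N₁ := by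
      rw [← hf M₁ M₂ hgt hle, ← hf N₁ N₂ hgt' hle', h]
    have h2 : M₂ = N₂ := by
      have := congrArg (fun M => Multiset.filter (fun x => x ≤ t) M) h
      simp only [Multiset.filter_add] at this
      rwa [Multiset.filter_eq_nil.2 (fun a ha => not_le.2 (hgt a ha)),
        Multiset.filter_eq_nil.2 (fun a ha => not_le.2 (hgt' a ha)),
        Multiset.filter_eq_self.2 hle, Multiset.filter_eq_self.2 hle',
        zero_add, zero_add] at this
    exact Prod.ext h1 h2
  rw [← himg, Set.ncard_image_of_injOn hinj]
lemma qPoch_zero : qPoch 0 = 1 := by simp [qPoch]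

lemma qPoch_succ (n : ℕ) : qPoch (n + 1) = qPoch n * (1 - X ^ (n + 1)) := by
  simp [qPoch, Finset.prod_range_succ]

lemma SQ_zero_eq_one : SQ (fun M => M = 0) = 1 := by
  ext n
  rw [SQ, coeff_mk, coeff_one]
  rcases eq_or_ne n 0 with rfl | hn
  · rw [if_pos rfl]
    have : PtnSet (fun M => M = 0) 0 = {(0 : Multiset ℕ)} := by
      rw [ptnSet_def]; ext M
      simp only [Set.mem_setOf_eq, Set.mem_singleton_iff]
      constructor
      · rintro ⟨_, rfl, _⟩; rfl
      · rintro rfl; simp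
    rw [this, Set.ncard_singleton]; norm_num
  · rw [if_neg hn]
    have : PtnSet (fun M => M = 0) n = ∅ := by
      rw [ptnSet_def]; ext M
      simp only [Set.mem_setOf_eq, Set.mem_empty_iff_false, iff_false]
      rintro ⟨_, rfl, h⟩
      exact hn (by simpa using h.symm)
    rw [this]; simp

lemma SQ_le_zero : SQ (fun M => ∀ x ∈ M, x ≤ 0) = 1 := by
  rw [show (1 : PowerSeries ℚ) = SQ (fun M => M = 0) from SQ_zero_eq_one.symm]
  apply SQ_congr
  intro M hpos
  constructor
  · intro h
    apply Multiset.eq_zero_of_forall_notMem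
    intro x hx
    have h1 := h x hx
    have h2 := hpos x hx
    omega
  · rintro rfl; simp

lemma SQ_all_eq (t : ℕ) (ht : 1 ≤ t) :
    SQ (fun M => ∀ x ∈ M, x = t) = PowerSeries.mk (fun n => if t ∣ n then 1 else 0) := by
  ext n
  rw [SQ, coeff_mk, coeff_mk]
  by_cases hdvd : t ∣ n
  · rw [if_pos hdvd]
    obtain ⟨c, rfl⟩ := hdvd
    have : PtnSet (fun M => ∀ x ∈ M, x = t) (t * c) = {Multiset.replicate c t} := by
      rw [ptnSet_def]; ext M
      simp only [Set.mem_setOf_eq, Set.mem_singleton_iff]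
      constructor
      · rintro ⟨hpos, hall, hsum⟩
        have hrep : M = Multiset.replicate (Multiset.card M) t :=
          Multiset.eq_replicate_card.2 hall
        have hcard : Multiset.card M = c := by
          have : M.sum = Multiset.card M * t := by
            rw [hrep]; simp [Multiset.sum_replicate, mul_comm]
          rw [this] at hsum
          have : Multiset.card M * t = c * t := by rw [hsum]; ring
          exact Nat.eq_of_mul_eq_mul_right ht this
        rw [hrep, hcard]
      · rintro rfl
        refine ⟨fun x hx => ?_, fun x hx => Multiset.eq_of_mem_replicate hx, ?_⟩
        · rw [Multiset.eq_of_mem_replicate hx]; omega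
        · simp [Multiset.sum_replicate, mul_comm]
    rw [this, Set.ncard_singleton]; norm_num
  · rw [if_neg hdvd]
    have : PtnSet (fun M => ∀ x ∈ M, x = t) n = ∅ := by
      rw [ptnSet_def]; ext M
      simp only [Set.mem_setOf_eq, Set.mem_empty_iff_false, iff_false]
      rintro ⟨hpos, hall, hsum⟩
      apply hdvd
      have hrep : M = Multiset.replicate (Multiset.card M) t :=
        Multiset.eq_replicate_card.2 hall
      refine ⟨Multiset.card M, ?_⟩
      rw [← hsum, hrep]
      simp [Multiset.sum_replicate, mul_comm]
    rw [this]; simp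

lemma indicator_mul_one_sub (t : ℕ) (ht : 1 ≤ t) :
    PowerSeries.mk (fun n => if t ∣ n then (1 : ℚ) else 0) * (1 - X ^ t) = 1 := by
  ext n
  rw [mul_sub, mul_one, map_sub, coeff_mul_X_pow', coeff_mk, coeff_one]
  by_cases hn : n = 0
  · subst hn
    rw [if_pos (dvd_zero t), if_neg (by omega), if_pos rfl]
    norm_num
  · rw [if_neg hn]
    by_cases hle : t ≤ n
    · rw [if_pos hle, coeff_mk]
      have : t ∣ n - t ↔ t ∣ n := by
        constructor
        · intro h; have := Nat.dvd_add h (dvd_refl t); simpa [Nat.sub_add_cancel hle] using this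
        · intro h; exact (Nat.dvd_sub h (dvd_refl t))
      by_cases hd : t ∣ n
      · rw [if_pos hd, if_pos (this.2 hd)]; ring
      · rw [if_neg hd, if_neg (fun hh => hd (this.1 hh))]; ring
    · rw [if_neg hle]
      have : ¬ t ∣ n := fun hd => hle (Nat.le_of_dvd (by omega) hd)
      rw [if_neg this]; ring

lemma SQ_le_mul_qPoch (t : ℕ) : SQ (fun M => ∀ x ∈ M, x ≤ t) * qPoch t = 1 := by
  induction t with
  | zero => rw [SQ_le_zero, qPoch_zero, one_mul]
  | succ t ih =>
    have hsplit := SQ_split t (fun M => ∀ x ∈ M, x ≤ t + 1) (fun _ => True)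
    have hL : SQ (fun M => (∀ x ∈ M.filter (fun x => t < x), x ≤ t + 1) ∧
        True) = SQ (fun M => ∀ x ∈ M, x ≤ t + 1) := by
      apply SQ_congr
      intro M _
      simp only [and_true]
      constructor
      · intro h x hx
        by_cases hxt : t < x
        · exact h x (Multiset.mem_filter.2 ⟨hx, hxt⟩)
        · omega
      · intro h x hx
        exact h x (Multiset.mem_of_mem_filter hx)
    have hR1 : SQ (fun M => (∀ x ∈ M, t < x) ∧ ∀ x ∈ M, x ≤ t + 1)
        = SQ (fun M => ∀ x ∈ M, x = t + 1) := by
      apply SQ_congr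
      intro M _
      constructor
      · rintro ⟨h1, h2⟩ 
        intro x hx
        have := h1 x hx; have := h2 x hx; omega
      · intro h
        exact ⟨fun x hx => by have := h x hx; omega, fun x hx => by have := h x hx; omega⟩
    have hR2 : SQ (fun M => (∀ x ∈ M, x ≤ t) ∧ True) = SQ (fun M => ∀ x ∈ M, x ≤ t) := by
      apply SQ_congr; intro M _; simp
    rw [hL, hR1, hR2] at hsplit
    rw [hsplit, qPoch_succ]
    calc SQ (fun M => ∀ x ∈ M, x = t + 1) * SQ (fun M => ∀ x ∈ M, x ≤ t) *
          (qPoch t * (1 - X ^ (t + 1)))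
        = (SQ (fun M => ∀ x ∈ M, x = t + 1) * (1 - X ^ (t + 1))) *
          (SQ (fun M => ∀ x ∈ M, x ≤ t) * qPoch t) := by ring
      _ = 1 := by
          rw [SQ_all_eq (t + 1) (by omega), indicator_mul_one_sub (t + 1) (by omega), ih,
            one_mul]

lemma SQ_ge (t : ℕ) :
    SQ (fun _ => True) * qPoch t = SQ (fun M => ∀ x ∈ M, t < x) := by
  have hsplit := SQ_split t (fun _ : Multiset ℕ => True) (fun _ : Multiset ℕ => True)
  have hL : SQ (fun M : Multiset ℕ => True ∧ True) = SQ (fun _ => True) := by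
    apply SQ_congr; intro M _; simp
  have hR1 : SQ (fun M => (∀ x ∈ M, t < x) ∧ True) = SQ (fun M => ∀ x ∈ M, t < x) := by
    apply SQ_congr; intro M _; simp
  have hR2 : SQ (fun M => (∀ x ∈ M, x ≤ t) ∧ True) = SQ (fun M => ∀ x ∈ M, x ≤ t) := by
    apply SQ_congr; intro M _; simp
  rw [hL, hR1, hR2] at hsplit
  rw [hsplit]
  calc SQ (fun M => ∀ x ∈ M, t < x) * SQ (fun M => ∀ x ∈ M, x ≤ t) * qPoch t
      = SQ (fun M => ∀ x ∈ M, t < x) * (SQ (fun M => ∀ x ∈ M, x ≤ t) * qPoch t) := by ring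
    _ = _ := by rw [SQ_le_mul_qPoch, mul_one]

lemma SQ_min (k : ℕ) (hk : 1 ≤ k) :
    SQ (fun M => k ∈ M ∧ ∀ x ∈ M, k ≤ x) = X ^ k * SQ (fun M => ∀ x ∈ M, k ≤ x) := by
  ext n
  rw [SQ, coeff_mk, show (X : PowerSeries ℚ) ^ k * SQ (fun M => ∀ x ∈ M, k ≤ x)
    = SQ (fun M => ∀ x ∈ M, k ≤ x) * X ^ k from mul_comm _ _, coeff_mul_X_pow']
  by_cases hkn : k ≤ n
  · rw [if_pos hkn, SQ, coeff_mk]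
    congr 1
    have himg : (fun M : Multiset ℕ => k ::ₘ M) '' PtnSet (fun M => ∀ x ∈ M, k ≤ x) (n - k)
        = PtnSet (fun M => k ∈ M ∧ ∀ x ∈ M, k ≤ x) n := by
      rw [ptnSet_def, ptnSet_def]
      ext N
      constructor
      · rintro ⟨M, ⟨hpos, hge, hsum⟩, rfl⟩
        refine ⟨?_, ⟨Multiset.mem_cons_self _ _, ?_⟩, ?_⟩
        · intro x hx
          rcases Multiset.mem_cons.1 hx with rfl | h
          · omega
          · exact hpos x h
        · intro x hx
          rcases Multiset.mem_cons.1 hx with rfl | h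
          · omega
          · exact hge x h
        · rw [Multiset.sum_cons, hsum]; omega
      · rintro ⟨hpos, ⟨hmem, hge⟩, hsum⟩
        refine ⟨N.erase k, ⟨?_, ?_, ?_⟩, Multiset.cons_erase hmem⟩
        · exact fun x hx => hpos x (Multiset.mem_of_mem_erase hx)
        · exact fun x hx => hge x (Multiset.mem_of_mem_erase hx)
        · have := Multiset.cons_erase hmem
          have hs : (k ::ₘ N.erase k).sum = N.sum := by rw [this]
          rw [Multiset.sum_cons] at hs
          omega
    have hinj : Set.InjOn (fun M : Multiset ℕ => k ::ₘ M)
        (PtnSet (fun M => ∀ x ∈ M, k ≤ x) (n - k)) := by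
      intro a _ b _ h
      simpa using h
    rw [← himg, Set.ncard_image_of_injOn hinj]
  · rw [if_neg hkn]
    have : PtnSet (fun M => k ∈ M ∧ ∀ x ∈ M, k ≤ x) n = ∅ := by
      rw [ptnSet_def]
      ext N
      simp only [Set.mem_setOf_eq, Set.mem_empty_iff_false, iff_false]
      rintro ⟨hpos, ⟨hmem, _⟩, hsum⟩
      have : k ≤ N.sum := Multiset.single_le_sum (fun x _ => Nat.zero_le x) k hmem
      omega
    rw [this]; simp
/-- splitting a count by a decidable side condition -/
lemma SQ_add_split (Q R : Multiset ℕ → Prop) :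
    SQ Q = SQ (fun M => Q M ∧ R M) + SQ (fun M => Q M ∧ ¬ R M) := by
  ext n
  rw [map_add, SQ, SQ, SQ, coeff_mk, coeff_mk, coeff_mk]
  rw [← Nat.cast_add]
  congr 1
  have hu : PtnSet Q n = PtnSet (fun M => Q M ∧ R M) n ∪ PtnSet (fun M => Q M ∧ ¬ R M) n := by
    rw [ptnSet_def, ptnSet_def, ptnSet_def]
    ext M
    simp only [Set.mem_setOf_eq, Set.mem_union]
    by_cases h : R M
    · tauto
    · tauto
  have hd : Disjoint (PtnSet (fun M => Q M ∧ R M) n) (PtnSet (fun M => Q M ∧ ¬ R M) n) := by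
    rw [Set.disjoint_left]
    intro M h1 h2
    rw [ptnSet_def] at h1 h2
    exact h2.2.1.2 h1.2.1.2
  rw [hu, Set.ncard_union_eq hd (ptnSet_finite _ n) (ptnSet_finite _ n)]

/-- removing a forced part `k` -/
lemma SQ_mem_eq (k : ℕ) (hk : 1 ≤ k) (Q Q' : Multiset ℕ → Prop)
    (h1 : ∀ M : Multiset ℕ, k ∈ M → (Q M ↔ Q' (M.erase k))) :
    SQ (fun M => k ∈ M ∧ Q M) = X ^ k * SQ Q' := by
  ext n
  rw [SQ, coeff_mk, show (X : PowerSeries ℚ) ^ k * SQ Q' = SQ Q' * X ^ k from mul_comm _ _,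
    coeff_mul_X_pow']
  by_cases hkn : k ≤ n
  · rw [if_pos hkn, SQ, coeff_mk]
    congr 1
    have himg : (fun M : Multiset ℕ => k ::ₘ M) '' PtnSet Q' (n - k)
        = PtnSet (fun M => k ∈ M ∧ Q M) n := by
      rw [ptnSet_def, ptnSet_def]
      ext N
      constructor
      · rintro ⟨M, ⟨hpos, hQ', hsum⟩, rfl⟩
        have hmem : k ∈ k ::ₘ M := Multiset.mem_cons_self _ _
        refine ⟨?_, ⟨hmem, ?_⟩, ?_⟩
        · intro x hx
          rcases Multiset.mem_cons.1 hx with rfl | h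
          · omega
          · exact hpos x h
        · rw [h1 _ hmem, Multiset.erase_cons_head]
          exact hQ'
        · rw [Multiset.sum_cons, hsum]; omega
      · rintro ⟨hpos, ⟨hmem, hQ⟩, hsum⟩
        refine ⟨N.erase k, ⟨?_, ?_, ?_⟩, Multiset.cons_erase hmem⟩
        · exact fun x hx => hpos x (Multiset.mem_of_mem_erase hx)
        · exact (h1 N hmem).1 hQ
        · have hs : (k ::ₘ N.erase k).sum = N.sum := by rw [Multiset.cons_erase hmem]
          rw [Multiset.sum_cons] at hs
          omega
    have hinj : Set.InjOn (fun M : Multiset ℕ => k ::ₘ M) (PtnSet Q' (n - k)) := by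
      intro a _ b _ h
      simpa using h
    rw [← himg, Set.ncard_image_of_injOn hinj]
  · rw [if_neg hkn]
    have : PtnSet (fun M => k ∈ M ∧ Q M) n = ∅ := by
      rw [ptnSet_def]
      ext N
      simp only [Set.mem_setOf_eq, Set.mem_empty_iff_false, iff_false]
      rintro ⟨hpos, ⟨hmem, _⟩, hsum⟩
      have : k ≤ N.sum := Multiset.single_le_sum (fun x _ => Nat.zero_le x) k hmem
      omega
    rw [this]; simp

noncomputable def Bser (a b : ℕ) : PowerSeries ℚ :=
  SQ (fun M => Multiset.card M ≤ a ∧ ∀ x ∈ M, x ≤ b)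

lemma Bser_zero_left (b : ℕ) : Bser 0 b = 1 := by
  rw [Bser, ← SQ_zero_eq_one]
  apply SQ_congr
  intro M _
  constructor
  · rintro ⟨h, _⟩
    exact Multiset.card_eq_zero.1 (by omega)
  · rintro rfl; simp

lemma Bser_zero_right (a : ℕ) : Bser a 0 = 1 := by
  rw [Bser, ← SQ_zero_eq_one]
  apply SQ_congr
  intro M hpos
  constructor
  · rintro ⟨_, h⟩
    apply Multiset.eq_zero_of_forall_notMem
    intro x hx
    have h1 := h x hx
    have h2 := hpos x hx
    omega
  · rintro rfl; simp

lemma Bser_rec (a b : ℕ) :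
    Bser (a + 1) (b + 1) = Bser (a + 1) b + X ^ (b + 1) * Bser a (b + 1) := by
  rw [Bser, SQ_add_split (fun M => Multiset.card M ≤ a + 1 ∧ ∀ x ∈ M, x ≤ b + 1)
    (fun M => (b + 1) ∉ M)]
  congr 1
  · -- the part without (b+1)
    rw [Bser]
    apply SQ_congr
    intro M _
    constructor
    · rintro ⟨⟨h1, h2⟩, h3⟩
      refine ⟨h1, fun x hx => ?_⟩
      have := h2 x hx
      rcases Nat.lt_or_ge x (b + 1) with h | h
      · omega
      · exfalso; apply h3; have hxeq : x = b + 1 := by omega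
        rwa [← hxeq]
    · rintro ⟨h1, h2⟩
      refine ⟨⟨h1, fun x hx => by have := h2 x hx; omega⟩, fun hmem => ?_⟩
      have := h2 _ hmem
      omega
  · -- the part with (b+1) ∈ M
    rw [show (fun M : Multiset ℕ => (Multiset.card M ≤ a + 1 ∧ ∀ x ∈ M, x ≤ b + 1) ∧ ¬ (b + 1) ∉ M)
      = (fun M : Multiset ℕ => (b + 1) ∈ M ∧ (Multiset.card M ≤ a + 1 ∧ ∀ x ∈ M, x ≤ b + 1))
      from funext fun M => propext (by tauto)]
    rw [SQ_mem_eq (b + 1) (by omega) _ (fun M => Multiset.card M ≤ a ∧ ∀ x ∈ M, x ≤ b + 1), Bser]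
    intro M hmem
    have hcard : Multiset.card (M.erase (b + 1)) = Multiset.card M - 1 :=
      Multiset.card_erase_of_mem hmem
    have hcpos : 1 ≤ Multiset.card M := by
      rw [Nat.one_le_iff_ne_zero, Ne, Multiset.card_eq_zero]
      rintro rfl
      simp at hmem
    constructor
    · rintro ⟨h1, h2⟩
      exact ⟨by omega, fun x hx => h2 x (Multiset.mem_of_mem_erase hx)⟩
    · rintro ⟨h1, h2⟩
      constructor
      · omega
      · intro x hx
        rw [← Multiset.cons_erase hmem] at hx
        rcases Multiset.mem_cons.1 hx with rfl | h
        · omega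
        · exact h2 x h

lemma box (a : ℕ) : ∀ b : ℕ, Bser a b * (qPoch a * qPoch b) = qPoch (a + b) := by
  induction a with
  | zero =>
    intro b
    rw [Bser_zero_left, qPoch_zero, one_mul, one_mul, Nat.zero_add]
  | succ a iha =>
    intro b
    induction b with
    | zero => rw [Bser_zero_right, qPoch_zero, one_mul, mul_one]
    | succ b ihb =>
      have h2 := iha (b + 1)
      rw [show a + (b + 1) = (a + 1) + b from by omega] at h2
      rw [Bser_rec, show (a + 1) + (b + 1) = ((a + 1) + b) + 1 from rfl,
        qPoch_succ ((a + 1) + b), qPoch_succ b, qPoch_succ a] at *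
      rw [show (X : PowerSeries ℚ) ^ (a + 1 + b + 1) = X ^ (a + 1) * X ^ (b + 1) from by
        rw [← pow_add]; ring_nf]
      linear_combination (1 - (X : PowerSeries ℚ) ^ (b + 1)) * ihb
        + (X : PowerSeries ℚ) ^ (b + 1) * (1 - (X : PowerSeries ℚ) ^ (a + 1)) * h2

lemma SQ_nonempty (Q : Multiset ℕ → Prop) (hQ : Q 0) :
    SQ (fun M => M ≠ 0 ∧ Q M) = SQ Q - 1 := by
  ext n
  rw [map_sub, SQ, SQ, coeff_mk, coeff_mk, coeff_one]
  rcases eq_or_ne n 0 with rfl | hn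
  · rw [if_pos rfl]
    have h1 : PtnSet (fun M => M ≠ 0 ∧ Q M) 0 = ∅ := by
      rw [ptnSet_def]
      ext M
      simp only [Set.mem_setOf_eq, Set.mem_empty_iff_false, iff_false]
      rintro ⟨hpos, ⟨hne, _⟩, hsum⟩
      apply hne
      apply Multiset.eq_zero_of_forall_notMem
      intro x hx
      have h1 := hpos x hx
      have h2 : x ≤ M.sum := Multiset.single_le_sum (fun y _ => Nat.zero_le y) x hx
      omega
    have h2 : PtnSet Q 0 = {(0 : Multiset ℕ)} := by
      rw [ptnSet_def]
      ext M
      simp only [Set.mem_setOf_eq, Set.mem_singleton_iff]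
      constructor
      · rintro ⟨hpos, _, hsum⟩
        apply Multiset.eq_zero_of_forall_notMem
        intro x hx
        have h1 := hpos x hx
        have h2 : x ≤ M.sum := Multiset.single_le_sum (fun y _ => Nat.zero_le y) x hx
        omega
      · rintro rfl
        exact ⟨by simp, hQ, by simp⟩
    rw [h1, h2, Set.ncard_singleton]
    simp
  · rw [if_neg hn]
    have : PtnSet (fun M => M ≠ 0 ∧ Q M) n = PtnSet Q n := by
      rw [ptnSet_def, ptnSet_def]
      ext M
      simp only [Set.mem_setOf_eq]
      constructor
      · rintro ⟨h1, ⟨_, h2⟩, h3⟩; exact ⟨h1, h2, h3⟩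
      · rintro ⟨h1, h2, h3⟩
        refine ⟨h1, ⟨?_, h2⟩, h3⟩
        rintro rfl
        simp at h3
        omega
    rw [this]
    simp

lemma tel (a : ℕ) : ∀ b : ℕ, a ≤ b →
    ∑ k ∈ Finset.Icc (a + 1) b, (X : PowerSeries ℚ) ^ k * qPoch (k - 1) = qPoch a - qPoch b := by
  intro b
  induction b with
  | zero =>
    intro h
    interval_cases a
    simp
  | succ b ih =>
    intro h
    rcases eq_or_lt_of_le h with rfl | hlt
    · simp
    · have hab : a ≤ b := by omega
      rw [Finset.sum_Icc_succ_top (by omega : a + 1 ≤ b + 1), ih hab, qPoch_succ b,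
        Nat.add_sub_cancel]
      ring
lemma sorted_getElem_le {l : List ℕ} (hs : l.Pairwise (· ≥ ·)) {i j : ℕ} (hij : i ≤ j)
    (hj : j < l.length) : l[j] ≤ l[i]'(by omega) := by
  rcases eq_or_lt_of_le hij with rfl | hlt
  · exact le_refl _
  · exact List.pairwise_iff_getElem.1 hs i j (by omega) hj hlt

lemma Kpart_mem {l : List ℕ} (hne : l ≠ []) : Kpart l ∈ l := by
  have hlen : 0 < l.length := List.length_pos_iff.2 hne
  rw [Kpart, List.getD_eq_getElem l 0 (by omega)]
  exact List.getElem_mem _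

lemma Kpart_min {l : List ℕ} (hs : l.Pairwise (· ≥ ·)) (hne : l ≠ []) :
    ∀ x ∈ l, Kpart l ≤ x := by
  intro x hx
  have hlen : 0 < l.length := List.length_pos_iff.2 hne
  obtain ⟨i, hi, rfl⟩ := List.mem_iff_getElem.1 hx
  rw [Kpart, List.getD_eq_getElem l 0 (by omega)]
  exact sorted_getElem_le hs (by omega) (by omega)

lemma Kpart_pos {l : List ℕ} (hl : IsPtn l) (hne : l ≠ []) : 0 < Kpart l :=
  hl.2 _ (Kpart_mem hne)

lemma Kpart_unique {l : List ℕ} (hs : l.Pairwise (· ≥ ·)) (hne : l ≠ []) {k : ℕ}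
    (hmem : k ∈ l) (hmin : ∀ x ∈ l, k ≤ x) : k = Kpart l :=
  le_antisymm (hmin _ (Kpart_mem hne)) (Kpart_min hs hne _ hmem)

/-- The key combinatorial reformulation of the type-3 condition on the red partition. -/
lemma red_iff (r : ℕ) (hr : 2 ≤ r) (rd : List ℕ) (hrd : IsPtn rd) (hne : rd ≠ [])
    (k : ℕ) (hk : 1 ≤ k) :
    (rd.length ≤ k - 1 ∨ (k ≤ rd.length ∧ r ≤ k + Ikpart rd k))
      ↔ rd.countP (fun x => decide (x ≤ r - 1 - k)) ≤ k - 1 := by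
  set ℓ := rd.length with hℓ
  have hℓpos : 0 < ℓ := List.length_pos_iff.2 hne
  constructor
  · rintro (h | ⟨hkl, hik⟩)
    · exact le_trans (List.countP_le_length) h
    · -- k ≤ ℓ and i_k ≥ r - k
      by_cases hkr : r ≤ k
      · -- m = 0, count is 0
        have : rd.countP (fun x => decide (x ≤ r - 1 - k)) = 0 := by
          rw [List.countP_eq_zero]
          intro x hx
          have hx0 := hrd.2 x hx
          simp only [decide_eq_true_eq]
          omega
        omega
      · -- k < r
        have hik' : rd[ℓ - k]'(by omega) = Ikpart rd k := by
          rw [Ikpart, List.getD_eq_getElem rd 0 (by omega)]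
        -- prefix of length ℓ - k + 1 is all > r - 1 - k
        have hpre : ∀ j, j ≤ ℓ - k → ∀ hj : j < ℓ, ¬ (rd[j] ≤ r - 1 - k) := by
          intro j hjle hj
          have h1 : rd[ℓ - k]'(by omega) ≤ rd[j] := sorted_getElem_le hrd.1 hjle (by omega)
          rw [hik'] at h1
          omega
        have htake : (rd.take (ℓ - k + 1)).countP (fun x => decide (x ≤ r - 1 - k)) = 0 := by
          rw [List.countP_eq_zero]
          intro x hx
          obtain ⟨i, hi, rfl⟩ := List.mem_iff_getElem.1 hx
          rw [List.getElem_take] at *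
          have hilt : i < ℓ - k + 1 := by
            have := List.length_take (i := ℓ - k + 1) (l := rd)
            omega
          simp only [decide_eq_true_eq]
          exact hpre i (by omega) (by omega) 
        have hsplit := List.countP_append (p := fun x => decide (x ≤ r - 1 - k))
          (l₁ := rd.take (ℓ - k + 1)) (l₂ := rd.drop (ℓ - k + 1))
        rw [List.take_append_drop] at hsplit
        have hdroplen : (rd.drop (ℓ - k + 1)).length = ℓ - (ℓ - k + 1) := by
          rw [List.length_drop]
        have hdrop_le := List.countP_le_length
          (p := fun x => decide (x ≤ r - 1 - k)) (l := rd.drop (ℓ - k + 1))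
        omega
  · intro hcount
    by_cases hlk : ℓ ≤ k - 1
    · exact Or.inl hlk
    · right
      refine ⟨by omega, ?_⟩
      by_cases hkr : r ≤ k
      · omega
      · -- need Ikpart rd k ≥ r - k, i.e. rd[ℓ-k] > r - 1 - k
        have hik' : rd[ℓ - k]'(by omega) = Ikpart rd k := by
          rw [Ikpart, List.getD_eq_getElem rd 0 (by omega)]
        by_contra hcon
        push_neg at hcon
        have hsmall : rd[ℓ - k]'(by omega) ≤ r - 1 - k := by omega
        -- then the suffix from ℓ-k on, of length k, is all ≤ r-1-k
        have hsuf : (rd.drop (ℓ - k)).countP (fun x => decide (x ≤ r - 1 - k))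
            = (rd.drop (ℓ - k)).length := by
          rw [List.countP_eq_length]
          intro x hx
          obtain ⟨i, hi, rfl⟩ := List.mem_iff_getElem.1 hx
          rw [List.getElem_drop]
          have h1 : rd[ℓ - k + i]'(by rw [List.length_drop] at hi; omega)
              ≤ rd[ℓ - k]'(by omega) := sorted_getElem_le hrd.1 (by omega)
            (by rw [List.length_drop] at hi; omega)
          simp only [decide_eq_true_eq]
          omega
        have hsplit := List.countP_append (p := fun x => decide (x ≤ r - 1 - k))
          (l₁ := rd.take (ℓ - k)) (l₂ := rd.drop (ℓ - k))
        rw [List.take_append_drop] at hsplit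
        have hdroplen : (rd.drop (ℓ - k)).length = k := by
          rw [List.length_drop]; omega
        omega
noncomputable def BlackQ (k : ℕ) : Multiset ℕ → Prop := fun B => k ∈ B ∧ ∀ x ∈ B, k ≤ x
noncomputable def RedQ (r k : ℕ) : Multiset ℕ → Prop :=
  fun R => R ≠ 0 ∧ Multiset.countP (fun x => x ≤ r - 1 - k) R ≤ k - 1

lemma exists_sorted (M : Multiset ℕ) :
    ∃ l : List ℕ, l.Pairwise (· ≥ ·) ∧ (↑l : Multiset ℕ) = M := by
  refine ⟨(Multiset.sort M (· ≤ ·)).reverse, ?_, ?_⟩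
  · exact List.pairwise_reverse.2 (Multiset.pairwise_sort M (· ≤ ·))
  · have : ((Multiset.sort M (· ≤ ·)).reverse : List ℕ).Perm (Multiset.sort M (· ≤ ·)) :=
      List.reverse_perm _
    rw [Multiset.coe_eq_coe.2 this, Multiset.sort_eq]

def CNT (r : ℕ) (b rd : List ℕ) : Prop :=
  rd.countP (fun x => decide (x ≤ r - 1 - Kpart b)) ≤ Kpart b - 1

def LP (r n : ℕ) : Set (List ℕ × List ℕ) :=
  {z | IsPtn z.1 ∧ IsPtn z.2 ∧ z.1 ≠ [] ∧ z.2 ≠ [] ∧ CNT r z.1 z.2 ∧ z.1.sum + z.2.sum = n}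

lemma triple_eq_LP (r n : ℕ) (hr : 2 ≤ r) :
    {t : List ℕ × List ℕ × List ℕ |
      (Type3a t.1 t.2.1 t.2.2 ∨ Type3b r t.1 t.2.1 t.2.2)
        ∧ t.1.sum + t.2.1.sum + t.2.2.sum = n}.ncard = (LP r n).ncard := by
  have hiff : ∀ b rd : List ℕ, IsPtn b → IsPtn rd → b ≠ [] → rd ≠ [] →
      ((Type3a b rd [] ∨ Type3b r b rd []) ↔ CNT r b rd) := by
    intro b rd hb hrd hbne hrdne
    have hk : 1 ≤ Kpart b := Kpart_pos hb hbne
    have hnil : IsPtn ([] : List ℕ) := ⟨List.Pairwise.nil, by simp⟩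
    have h1 : 1 ≤ rd.length := by
      rw [Nat.one_le_iff_ne_zero, Ne, List.length_eq_zero_iff]
      exact hrdne
    rw [Type3a, Type3b, CNT]
    constructor
    · rintro (⟨_, _, _, _, _, _, _, h⟩ | ⟨_, _, _, _, _, _, h⟩)
      · exact (red_iff r hr rd hrd hrdne _ hk).1 (Or.inl h)
      · exact (red_iff r hr rd hrd hrdne _ hk).1 (Or.inr h)
    · intro h
      rcases (red_iff r hr rd hrd hrdne _ hk).2 h with h' | h'
      · exact Or.inl ⟨hb, hrd, hnil, hbne, hrdne, rfl, h1, h'⟩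
      · exact Or.inr ⟨hb, hrd, hnil, hbne, hrdne, rfl, h'.1, h'.2⟩
  have himg : (fun z : List ℕ × List ℕ => (z.1, z.2, ([] : List ℕ))) '' LP r n
      = {t : List ℕ × List ℕ × List ℕ |
        (Type3a t.1 t.2.1 t.2.2 ∨ Type3b r t.1 t.2.1 t.2.2)
          ∧ t.1.sum + t.2.1.sum + t.2.2.sum = n} := by
    ext t
    constructor
    · rintro ⟨⟨b, rd⟩, ⟨hb, hrd, hbne, hrdne, hcnt, hsum⟩, rfl⟩
      refine ⟨(hiff b rd hb hrd hbne hrdne).2 hcnt, by simpa using hsum⟩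
    · rintro ⟨hty, hsum⟩
      have hg : t.2.2 = [] := by
        rcases hty with h | h
        · exact h.2.2.2.2.2.1
        · exact h.2.2.2.2.2.1
      have hb : IsPtn t.1 := by rcases hty with h | h; exacts [h.1, h.1]
      have hrd : IsPtn t.2.1 := by rcases hty with h | h; exacts [h.2.1, h.2.1]
      have hbne : t.1 ≠ [] := by rcases hty with h | h; exacts [h.2.2.2.1, h.2.2.2.1]
      have hrdne : t.2.1 ≠ [] := by rcases hty with h | h; exacts [h.2.2.2.2.1, h.2.2.2.2.1]
      refine ⟨(t.1, t.2.1), ⟨hb, hrd, hbne, hrdne, ?_, ?_⟩, ?_⟩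
      · apply (hiff t.1 t.2.1 hb hrd hbne hrdne).1
        rw [hg] at hty
        exact hty
      · rw [hg] at hsum
        simpa using hsum
      · rw [Prod.ext_iff, Prod.ext_iff]
        exact ⟨rfl, rfl, hg.symm⟩
  have hinj : Set.InjOn (fun z : List ℕ × List ℕ => (z.1, z.2, ([] : List ℕ))) (LP r n) := by
    rintro ⟨a, b⟩ _ ⟨c, d⟩ _ h
    simp only [Prod.mk.injEq] at h
    rw [Prod.ext_iff]
    exact ⟨h.1, h.2.1⟩
  rw [← himg, Set.ncard_image_of_injOn hinj]

lemma LP_finite (r n : ℕ) : (LP r n).Finite := by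
  apply Set.Finite.of_finite_image (f := fun z : List ℕ × List ℕ =>
    ((↑z.1 : Multiset ℕ), (↑z.2 : Multiset ℕ)))
  · apply Set.Finite.subset (pairSet_finite (fun _ => True) (fun _ => True) n)
    rintro ⟨B, R⟩ ⟨⟨b, rd⟩, ⟨hb, hrd, _, _, _, hsum⟩, heq⟩
    simp only [Prod.mk.injEq] at heq
    refine ⟨?_, ?_, trivial, trivial, ?_⟩
    · rw [← heq.1]; exact fun x hx => hb.2 x hx
    · rw [← heq.2]; exact fun x hx => hrd.2 x hx
    · rw [← heq.1, ← heq.2]; simpa using hsum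
  · rintro ⟨a, b⟩ ⟨ha, hb, _⟩ ⟨c, d⟩ ⟨hc, hd, _⟩ h
    simp only [Prod.mk.injEq, Multiset.coe_eq_coe] at h
    rw [Prod.ext_iff]
    exact ⟨List.Perm.eq_of_pairwise' ha.1 hc.1 h.1,
      List.Perm.eq_of_pairwise' hb.1 hd.1 h.2⟩

lemma LP_fiber (r n k : ℕ) (hk : 1 ≤ k) :
    {z ∈ LP r n | Kpart z.1 = k}.ncard = (PairSet (BlackQ k) (RedQ r k) n).ncard := by
  have himg : (fun z : List ℕ × List ℕ => ((↑z.1 : Multiset ℕ), (↑z.2 : Multiset ℕ))) ''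
      {z ∈ LP r n | Kpart z.1 = k} = PairSet (BlackQ k) (RedQ r k) n := by
    ext ⟨B, R⟩
    constructor
    · rintro ⟨⟨b, rd⟩, ⟨⟨hb, hrd, hbne, hrdne, hcnt, hsum⟩, hkp⟩, heq⟩
      simp only [Prod.mk.injEq] at heq
      obtain ⟨h1, h2⟩ := heq
      subst h1; subst h2
      refine ⟨fun x hx => hb.2 x hx, fun x hx => hrd.2 x hx, ?_, ?_, by simpa using hsum⟩
      · exact ⟨by rw [← hkp]; exact_mod_cast Kpart_mem hbne,
          fun x hx => by rw [← hkp]; exact Kpart_min hb.1 hbne x (by exact_mod_cast hx)⟩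
      · constructor
        · simpa using hrdne
        · rw [Multiset.coe_countP]
          rw [CNT, hkp] at hcnt
          exact hcnt
    · rintro ⟨hposB, hposR, ⟨hmem, hge⟩, ⟨hRne, hcnt⟩, hsum⟩
      obtain ⟨b, hbs, hbeq⟩ := exists_sorted B
      obtain ⟨rd, hrds, hrdeq⟩ := exists_sorted R
      have hbne : b ≠ [] := by
        rintro rfl
        rw [← hbeq] at hmem
        simp at hmem
      have hrdne : rd ≠ [] := by
        rintro rfl
        rw [← hrdeq] at hRne
        simp at hRne
      have hkp : Kpart b = k := by
        refine (Kpart_unique hbs hbne ?_ ?_).symm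
        · rw [← Multiset.mem_coe, hbeq]; exact hmem
        · intro x hx
          exact hge x (by rw [← hbeq]; exact_mod_cast hx)
      refine ⟨(b, rd), ⟨⟨⟨hbs, fun x hx => hposB x (by rw [← hbeq]; exact_mod_cast hx)⟩,
        ⟨hrds, fun x hx => hposR x (by rw [← hrdeq]; exact_mod_cast hx)⟩,
        hbne, hrdne, ?_, ?_⟩, hkp⟩, ?_⟩
      · rw [CNT, hkp]
        rw [← hrdeq, Multiset.coe_countP] at hcnt
        exact hcnt
      · have h1 : b.sum = B.sum := by rw [← hbeq]; simp
        have h2 : rd.sum = R.sum := by rw [← hrdeq]; simp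
        have hsum' : B.sum + R.sum = n := by simpa using hsum
        show b.sum + rd.sum = n
        omega
      · simp only [Prod.mk.injEq]
        exact ⟨hbeq, hrdeq⟩
  have hinj : Set.InjOn (fun z : List ℕ × List ℕ => ((↑z.1 : Multiset ℕ), (↑z.2 : Multiset ℕ)))
      {z ∈ LP r n | Kpart z.1 = k} := by
    rintro ⟨a, b⟩ ⟨⟨ha, hb, _⟩, _⟩ ⟨c, d⟩ ⟨⟨hc, hd, _⟩, _⟩ h
    simp only [Prod.mk.injEq, Multiset.coe_eq_coe] at h
    rw [Prod.ext_iff]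
    exact ⟨List.Perm.eq_of_pairwise' ha.1 hc.1 h.1,
      List.Perm.eq_of_pairwise' hb.1 hd.1 h.2⟩
  rw [← himg, Set.ncard_image_of_injOn hinj]

lemma LP_decomp (r n : ℕ) :
    (LP r n).ncard = ∑ k ∈ Finset.Ioc 0 n, {z ∈ LP r n | Kpart z.1 = k}.ncard := by
  classical
  have hfin := LP_finite r n
  have hmem : ∀ z ∈ hfin.toFinset, Kpart z.1 ∈ Finset.Ioc 0 n := by
    intro z hz
    rw [Set.Finite.mem_toFinset] at hz
    obtain ⟨hb, hrd, hbne, hrdne, _, hsum⟩ := hz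
    rw [Finset.mem_Ioc]
    constructor
    · exact Kpart_pos hb hbne
    · have h1 : Kpart z.1 ≤ z.1.sum := by
        have := Kpart_mem hbne
        exact List.le_sum_of_mem (by exact_mod_cast this)
      omega
  have h0 : (LP r n).ncard = hfin.toFinset.card := by
    rw [← Set.ncard_coe_finset hfin.toFinset, hfin.coe_toFinset]
  rw [h0, Finset.card_eq_sum_card_fiberwise hmem]
  refine Finset.sum_congr rfl fun k _ => ?_
  rw [← Set.ncard_coe_finset]
  congr 1
  ext z
  simp only [Finset.coe_filter, Set.mem_setOf_eq, Set.Finite.mem_toFinset]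
noncomputable def Hp : PowerSeries ℚ := SQ (fun _ => True)
noncomputable def Kser (k : ℕ) : PowerSeries ℚ := SQ (BlackQ k)
noncomputable def Rser (r k : ℕ) : PowerSeries ℚ := SQ (RedQ r k)

lemma Hq_eq : Hq = Hp := by
  ext n
  rw [Hq, Hp, SQ, coeff_mk, coeff_mk,
    ← ncard_list_eq (fun _ => True) (fun _ => True) (fun _ _ => Iff.rfl) n]
  congr 2
  ext l
  simp only [Set.mem_setOf_eq, true_and, and_true]

lemma Kser_eq (k : ℕ) (hk : 1 ≤ k) : Kser k = X ^ k * (Hp * qPoch (k - 1)) := by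
  rw [Kser, show BlackQ k = fun M => k ∈ M ∧ ∀ x ∈ M, k ≤ x from rfl,
    SQ_min k hk, Hp, SQ_ge (k - 1)]
  congr 1
  apply SQ_congr
  intro M _
  constructor
  · intro h x hx; have := h x hx; omega
  · intro h x hx; have := h x hx; omega

lemma Rser_eq (r k : ℕ) (hk : 1 ≤ k) :
    Rser r k = Bser (k - 1) (r - 1 - k) * (Hp * qPoch (r - 1 - k)) - 1 := by
  set m := r - 1 - k with hm
  have h1 : Rser r k = SQ (fun M => Multiset.countP (fun x => x ≤ m) M ≤ k - 1) - 1 := by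
    rw [Rser, show RedQ r k
      = fun R => R ≠ 0 ∧ Multiset.countP (fun x => x ≤ m) R ≤ k - 1 from rfl]
    exact SQ_nonempty _ (by simp)
  have h2 : SQ (fun M => Multiset.countP (fun x => x ≤ m) M ≤ k - 1)
      = SQ (fun M => ∀ x ∈ M, m < x) * SQ (fun M => (∀ x ∈ M, x ≤ m) ∧ Multiset.card M ≤ k - 1) := by
    have := SQ_split m (fun _ => True) (fun M => Multiset.card M ≤ k - 1)
    rw [show SQ (fun M => True ∧ Multiset.card (M.filter (fun x => x ≤ m)) ≤ k - 1)
        = SQ (fun M => Multiset.countP (fun x => x ≤ m) M ≤ k - 1) from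
      SQ_congr fun M _ => by rw [Multiset.countP_eq_card_filter]; tauto] at this
    rw [this]
    congr 1
    apply SQ_congr
    intro M _
    tauto
  have h3 : SQ (fun M => (∀ x ∈ M, x ≤ m) ∧ Multiset.card M ≤ k - 1) = Bser (k - 1) m := by
    rw [Bser]
    exact SQ_congr fun M _ => and_comm
  rw [h1, h2, h3, ← SQ_ge m, Hp]
  ring
lemma qPoch_one : qPoch 1 = 1 - X := by
  rw [show (1 : ℕ) = 0 + 1 from rfl, qPoch_succ, qPoch_zero, one_mul, pow_one]

lemma geom (s : ℕ) :
    qPoch (s + 1) * (qPoch 1)⁻¹ = qPoch s * ∑ i ∈ range (s + 1), (X : PowerSeries ℚ) ^ i := by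
  have hc : constantCoeff (qPoch 1) ≠ 0 := by
    rw [qPoch_one, map_sub, map_one, constantCoeff_X, sub_zero]
    norm_num
  have hinv : qPoch 1 * (qPoch 1)⁻¹ = 1 := PowerSeries.mul_inv_cancel _ hc
  have hgeo : (∑ i ∈ range (s + 1), (X : PowerSeries ℚ) ^ i) * qPoch 1 = 1 - X ^ (s + 1) := by
    rw [qPoch_one]
    have := geom_sum_mul (X : PowerSeries ℚ) (s + 1)
    linear_combination -this
  calc qPoch (s + 1) * (qPoch 1)⁻¹
      = qPoch s * ((∑ i ∈ range (s + 1), (X : PowerSeries ℚ) ^ i) * (qPoch 1 * (qPoch 1)⁻¹)) := by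
        rw [qPoch_succ, ← hgeo]; ring
    _ = _ := by rw [hinv, mul_one]

lemma star (r M : ℕ) (hr : 2 ≤ r) (hM : r - 2 ≤ M) :
    ∑ k ∈ Finset.Ioc 0 M, Kser k * Rser r k
      = (1 - 2 * Hp + Hp ^ 2 * qPoch (r - 1) * (qPoch 1)⁻¹) + (Hp - 1) * (1 - Hp * qPoch M) := by
  have hsplit : ∑ k ∈ Finset.Ioc 0 M, Kser k * Rser r k
      = ∑ k ∈ Finset.Ioc 0 (r - 2), Kser k * Rser r k
        + ∑ k ∈ Finset.Ioc (r - 2) M, Kser k * Rser r k :=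
    (Finset.sum_Ioc_consecutive _ (Nat.zero_le _) hM).symm
  have h1 : ∑ k ∈ Finset.Ioc 0 (r - 2), Kser k * Rser r k
      = Hp ^ 2 * qPoch (r - 2) * (∑ k ∈ Finset.Ioc 0 (r - 2), (X : PowerSeries ℚ) ^ k)
        - Hp * ∑ k ∈ Finset.Ioc 0 (r - 2), (X : PowerSeries ℚ) ^ k * qPoch (k - 1) := by
    rw [Finset.mul_sum, Finset.mul_sum, ← Finset.sum_sub_distrib]
    refine Finset.sum_congr rfl fun k hk => ?_
    rw [Finset.mem_Ioc] at hk
    have hk1 : 1 ≤ k := hk.1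
    have hbox : Bser (k - 1) (r - 1 - k) * (qPoch (k - 1) * qPoch (r - 1 - k)) = qPoch (r - 2) := by
      have := box (k - 1) (r - 1 - k)
      rwa [show (k - 1) + (r - 1 - k) = r - 2 from by omega] at this
    rw [Kser_eq k hk1, Rser_eq r k hk1]
    linear_combination ((X : PowerSeries ℚ) ^ k * Hp ^ 2) * hbox
  have h2 : ∑ k ∈ Finset.Ioc (r - 2) M, Kser k * Rser r k
      = Hp * (Hp - 1) * ∑ k ∈ Finset.Ioc (r - 2) M, (X : PowerSeries ℚ) ^ k * qPoch (k - 1) := by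
    rw [Finset.mul_sum]
    refine Finset.sum_congr rfl fun k hk => ?_
    rw [Finset.mem_Ioc] at hk
    have hk1 : 1 ≤ k := by omega
    rw [Kser_eq k hk1, Rser_eq r k hk1, show r - 1 - k = 0 from by omega, Bser_zero_right,
      qPoch_zero, one_mul, mul_one]
    ring
  have ht1 : ∑ k ∈ Finset.Ioc 0 (r - 2), (X : PowerSeries ℚ) ^ k * qPoch (k - 1)
      = 1 - qPoch (r - 2) := by
    have := tel 0 (r - 2) (Nat.zero_le _)
    rw [show Finset.Icc (0 + 1) (r - 2) = Finset.Ioc 0 (r - 2) from Finset.Icc_add_one_left_eq_Ioc 0 (r - 2),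
      qPoch_zero] at this
    exact this
  have ht2 : ∑ k ∈ Finset.Ioc (r - 2) M, (X : PowerSeries ℚ) ^ k * qPoch (k - 1)
      = qPoch (r - 2) - qPoch M := by
    have := tel (r - 2) M hM
    rwa [show Finset.Icc ((r - 2) + 1) M = Finset.Ioc (r - 2) M from Finset.Icc_add_one_left_eq_Ioc _ _]
      at this
  have hG : ∑ i ∈ range (r - 1), (X : PowerSeries ℚ) ^ i
      = 1 + ∑ k ∈ Finset.Ioc 0 (r - 2), (X : PowerSeries ℚ) ^ k := by
    have hins : range (r - 1) = insert 0 (Finset.Ioc 0 (r - 2)) := by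
      ext x
      simp only [Finset.mem_range, Finset.mem_insert, Finset.mem_Ioc]
      omega
    rw [hins, Finset.sum_insert (by simp), pow_zero]
  have hgeom : qPoch (r - 1) * (qPoch 1)⁻¹
      = qPoch (r - 2) * (1 + ∑ k ∈ Finset.Ioc 0 (r - 2), (X : PowerSeries ℚ) ^ k) := by
    have := geom (r - 2)
    rw [show (r - 2) + 1 = r - 1 from by omega, hG] at this
    exact this
  rw [hsplit, h1, h2, ht1, ht2]
  calc Hp ^ 2 * qPoch (r - 2) * (∑ k ∈ Finset.Ioc 0 (r - 2), (X : PowerSeries ℚ) ^ k)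
        - Hp * (1 - qPoch (r - 2)) + Hp * (Hp - 1) * (qPoch (r - 2) - qPoch M)
      = 1 - 2 * Hp + Hp ^ 2 * (qPoch (r - 2) * (1 + ∑ k ∈ Finset.Ioc 0 (r - 2), (X : PowerSeries ℚ) ^ k))
        + (Hp - 1) * (1 - Hp * qPoch M) := by ring
    _ = _ := by rw [← hgeom]; ring
lemma coeff_KR_zero (r n k : ℕ) (hk : n < k) : (coeff n) (Kser k * Rser r k) = 0 := by
  rw [Kser, Rser, coeff_SQ_mul]
  norm_cast
  rw [show (PairSet (BlackQ k) (RedQ r k) n) = ∅ from ?_]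
  · simp
  · ext ⟨B, R⟩
    simp only [PairSet, Set.mem_setOf_eq, Set.mem_empty_iff_false, iff_false]
    rintro ⟨hp1, _, ⟨hmem, _⟩, _, hsum⟩
    have h1 : k ≤ B.sum := Multiset.single_le_sum (fun x _ => Nat.zero_le x) k hmem
    omega

lemma vanish (M n : ℕ) (hn : n ≤ M) :
    (coeff n) ((Hp - 1) * (1 - Hp * qPoch M)) = 0 := by
  have hzero : ∀ j ≤ M, (coeff j) (1 - Hp * qPoch M) = 0 := by
    intro j hj
    rw [map_sub, Hp, SQ_ge M, SQ, coeff_mk, coeff_one]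
    rcases eq_or_ne j 0 with rfl | hjne
    · rw [if_pos rfl]
      rw [show PtnSet (fun M' => ∀ x ∈ M', M < x) 0 = {(0 : Multiset ℕ)} from ?_]
      · rw [Set.ncard_singleton]; norm_num
      · ext N
        simp only [PtnSet, Set.mem_setOf_eq, Set.mem_singleton_iff]
        constructor
        · rintro ⟨hpos, _, hsum⟩
          apply Multiset.eq_zero_of_forall_notMem
          intro x hx
          have h1 := hpos x hx
          have h2 : x ≤ N.sum := Multiset.single_le_sum (fun y _ => Nat.zero_le y) x hx
          omega
        · rintro rfl
          exact ⟨by simp, by simp, by simp⟩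
    · rw [if_neg hjne]
      rw [show PtnSet (fun M' => ∀ x ∈ M', M < x) j = ∅ from ?_]
      · simp
      · ext N
        simp only [PtnSet, Set.mem_setOf_eq, Set.mem_empty_iff_false, iff_false]
        rintro ⟨hpos, hgt, hsum⟩
        rcases Multiset.empty_or_exists_mem N with rfl | ⟨x, hx⟩
        · simp at hsum; omega
        · have h1 := hgt x hx
          have h2 : x ≤ N.sum := Multiset.single_le_sum (fun y _ => Nat.zero_le y) x hx
          omega
  rw [coeff_mul]
  refine Finset.sum_eq_zero fun ab hab => ?_
  rw [HasAntidiagonal.mem_antidiagonal] at hab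
  rw [hzero ab.2 (by omega), mul_zero]

/-- `S_3 = 1 − 2H + H² (q)_{r−1}/(q)_1`. -/
theorem S3_eq (r : ℕ) (hr : 2 ≤ r) :
    cseries (fun b rd g => Type3a b rd g ∨ Type3b r b rd g)
      = 1 - 2 * Hq + Hq ^ 2 * qPoch (r - 1) * (qPoch 1)⁻¹ := by
  rw [Hq_eq]
  ext n
  set M := n + r with hM
  have key : (coeff n) (cseries (fun b rd g => Type3a b rd g ∨ Type3b r b rd g))
      = (coeff n) (∑ k ∈ Finset.Ioc 0 M, Kser k * Rser r k) := by
    rw [cseries, coeff_mk, triple_eq_LP r n hr, LP_decomp r n]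
    rw [map_sum]
    have h1 : ∀ k ∈ Finset.Ioc 0 n, ((({z ∈ LP r n | Kpart z.1 = k}).ncard : ℚ))
        = (coeff n) (Kser k * Rser r k) := by
      intro k hk
      rw [Finset.mem_Ioc] at hk
      rw [LP_fiber r n k hk.1, Kser, Rser, coeff_SQ_mul]
    rw [Nat.cast_sum]
    rw [Finset.sum_congr rfl h1]
    refine Finset.sum_subset ?_ ?_
    · intro k hk
      simp only [Finset.mem_Ioc] at hk ⊢
      omega
    · intro k hk1 hk2
      simp only [Finset.mem_Ioc] at hk1 hk2
      exact coeff_KR_zero r n k (by omega)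
  rw [key, star r M hr (by omega), map_add, vanish M n (by omega), add_zero]
end
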